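/- arXiv:1704.08964 — 2 statements merged into one kernel-verified Lean document; each statement's English description precedes it below -/
import Mathlib

section
/- For every w with 0 < w < v there exists a constant C_w > 0 such that for all integers 0 ≤ k ≤ i < j one has E[ |E[U_i U_j | 𝓕_k]| ] ≤ C_w (j − i)^{−w/2}. -/
open MeasureTheory ProbabilityTheory Filter Finset
open scoped ProbabilityTheory ENNReal NNReal BigOperators

namespace DepNoise

variable {Ω : Type*} [MeasureSpace Ω]

/-- Variance of `U 0`. -/
noncomputable def varU (U : ℕ → Ω → ℝ) : ℝ :=
  (∫ ω, (U 0 ω) ^ 2) - (∫ ω, U 0 ω) ^ 2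

/-- Autocovariance `γ(h) = Cov(U 0, U h)`. -/
noncomputable def gammaCov (U : ℕ → Ω → ℝ) (h : ℕ) : ℝ :=
  (∫ ω, U 0 ω * U h ω) - (∫ ω, U 0 ω) * (∫ ω, U h ω)

/-- The σ-algebra `σ(U 0, …, U k)`. -/
def pastSigma (U : ℕ → Ω → ℝ) (k : ℕ) : MeasurableSpace Ω :=
  ⨆ i : Fin (k + 1), MeasurableSpace.comap (U i) inferInstance

/-- The σ-algebra `σ(U m, U (m+1), …)`. -/
def futureSigma (U : ℕ → Ω → ℝ) (m : ℕ) : MeasurableSpace Ω :=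
  ⨆ i : ℕ, MeasurableSpace.comap (U (m + i)) inferInstance

section Aux

variable {Ω' : Type*} {m0 : MeasurableSpace Ω'} {μ : Measure Ω'} [IsProbabilityMeasure μ]

lemma nonempty_of_prob (μ : Measure Ω') [IsProbabilityMeasure μ] : Nonempty Ω' := by
  by_contra h
  rw [not_nonempty_iff] at h
  have h1 := measure_univ (μ := μ)
  rw [Set.univ_eq_empty_iff.mpr h, measure_empty] at h1
  exact zero_ne_one h1

lemma abs_integral_le (f : Ω' → ℝ) : |∫ ω, f ω ∂μ| ≤ ∫ ω, |f ω| ∂μ := by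
  simpa [Real.norm_eq_abs] using norm_integral_le_integral_norm (μ := μ) f

lemma integrable_of_bdd {f : Ω' → ℝ} (hf : AEStronglyMeasurable f μ) {c : ℝ}
    (h : ∀ ω, |f ω| ≤ c) : Integrable f μ :=
  Integrable.mono' (integrable_const c) hf (Filter.Eventually.of_forall fun ω => by
    simpa [Real.norm_eq_abs] using h ω)

lemma integral_abs_condexp {m : MeasurableSpace Ω'} (hm : m ≤ m0) {f : Ω' → ℝ}
    (hf : Integrable f μ) :
    ∃ A : Set Ω', MeasurableSet[m] A ∧
      ∫ ω, |(μ[f|m]) ω| ∂μ = (∫ ω in A, f ω ∂μ) - ∫ ω in Aᶜ, f ω ∂μ := by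
  set g := μ[f|m] with hg
  have hA : MeasurableSet[m] {ω | 0 ≤ g ω} :=
    (stronglyMeasurable_condExp (m := m)).measurable measurableSet_Ici
  refine ⟨{ω | 0 ≤ g ω}, hA, ?_⟩
  have hA0 : MeasurableSet[m0] {ω | 0 ≤ g ω} := hm _ hA
  have hgint : Integrable g μ := integrable_condExp
  rw [← setIntegral_condExp hm hf hA, ← setIntegral_condExp hm hf hA.compl]
  rw [← @integral_add_compl Ω' ℝ m0 _ _ (fun ω => |g ω|) {ω | 0 ≤ g ω} μ hA0 hgint.abs]
  have h1 : ∫ ω in {ω | 0 ≤ g ω}, |g ω| ∂μ = ∫ ω in {ω | 0 ≤ g ω}, g ω ∂μ :=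
    @setIntegral_congr_fun Ω' ℝ m0 _ _ _ _ _ μ hA0 (fun ω hω => abs_of_nonneg hω)
  have h2 : ∫ ω in {ω | 0 ≤ g ω}ᶜ, |g ω| ∂μ = ∫ ω in {ω | 0 ≤ g ω}ᶜ, (-g ω) ∂μ :=
    @setIntegral_congr_fun Ω' ℝ m0 _ _ _ _ _ μ hA0.compl (fun ω hω => abs_of_neg (by
      simpa using (hω : ω ∈ {ω | 0 ≤ g ω}ᶜ)))
  rw [h1, h2, integral_neg]
  ring

lemma cov_indicator_le {Ω' : Type*} {m₂ : MeasurableSpace Ω'} {m0 : MeasurableSpace Ω'}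
    {μ : Measure Ω'} [IsProbabilityMeasure μ] (hm₂ : m₂ ≤ m0)
    {Y : Ω' → ℝ} (hY : StronglyMeasurable[m₂] Y) {b : ℝ} (hYb : ∀ ω, |Y ω| ≤ b)
    {α : ℝ} (A : Set Ω') (hA : MeasurableSet[m0] A)
    (hα : ∀ B : Set Ω', MeasurableSet[m₂] B →
      |(μ (A ∩ B)).toReal - (μ A).toReal * (μ B).toReal| ≤ α) :
    |(∫ ω in A, Y ω ∂μ) - (μ A).toReal * ∫ ω, Y ω ∂μ| ≤ 2 * b * α := by
  obtain ⟨ω₀⟩ := nonempty_of_prob μ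
  have hb0 : 0 ≤ b := (abs_nonneg _).trans (hYb ω₀)
  have hYint : Integrable Y μ := integrable_of_bdd (hY.mono hm₂).aestronglyMeasurable hYb
  set Xc : Ω' → ℝ := fun ω => A.indicator (fun _ => (1:ℝ)) ω - (μ A).toReal with hXcdef
  have hXc_meas : AEStronglyMeasurable Xc μ :=
    ((measurable_const.indicator hA).sub measurable_const).aestronglyMeasurable
  have hPA0 : (0:ℝ) ≤ (μ A).toReal := ENNReal.toReal_nonneg
  have hPA1 : (μ A).toReal ≤ 1 := by
    have h := prob_le_one (μ := μ) (s := A)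
    calc (μ A).toReal ≤ (1 : ℝ≥0∞).toReal := ENNReal.toReal_mono (by norm_num) h
      _ = 1 := by norm_num
  have hXc_bdd : ∀ ω, |Xc ω| ≤ 2 := by
    intro ω
    rw [hXcdef]
    by_cases hω : ω ∈ A <;>
      simp only [Set.indicator_of_mem, Set.indicator_of_notMem, hω, not_false_iff] <;>
      rw [abs_le] <;> constructor <;> simp <;> linarith
  have hXc_int : Integrable Xc μ := integrable_of_bdd hXc_meas hXc_bdd
  have hprod_int : Integrable (Y * Xc) μ := by
    refine integrable_of_bdd ((hY.mono hm₂).aestronglyMeasurable.mul hXc_meas) (c := b * 2) ?_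
    intro ω
    rw [Pi.mul_apply, abs_mul]
    exact mul_le_mul (hYb ω) (hXc_bdd ω) (abs_nonneg _) hb0
  have hkey : (∫ ω in A, Y ω ∂μ) - (μ A).toReal * ∫ ω, Y ω ∂μ = ∫ ω, (Y * Xc) ω ∂μ := by
    have hptw : ∀ ω, (Y * Xc) ω = A.indicator Y ω - (μ A).toReal * Y ω := by
      intro ω
      by_cases hω : ω ∈ A <;>
        simp only [Pi.mul_apply, hXcdef, Set.indicator_of_mem, Set.indicator_of_notMem, hω,
          not_false_iff] <;> ring
    rw [integral_congr_ae (Filter.Eventually.of_forall hptw),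
      integral_sub (hYint.indicator hA) (hYint.const_mul _),
      integral_indicator hA, integral_const_mul]
  rw [hkey]
  haveI : SigmaFinite (μ.trim hm₂) := by infer_instance
  have hpull : ∫ ω, (Y * Xc) ω ∂μ = ∫ ω, Y ω * (μ[Xc|m₂]) ω ∂μ := by
    rw [← integral_condExp (μ := μ) (f := Y * Xc) hm₂]
    exact integral_congr_ae (condExp_mul_of_stronglyMeasurable_left hY hprod_int hXc_int)
  rw [hpull]
  have hmulint : Integrable (fun ω => Y ω * (μ[Xc|m₂]) ω) μ :=
    Integrable.bdd_mul (c := b) integrable_condExp (hY.mono hm₂).aestronglyMeasurable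
      (Filter.Eventually.of_forall fun ω => by simpa [Real.norm_eq_abs] using hYb ω)
  have habs : |∫ ω, Y ω * (μ[Xc|m₂]) ω ∂μ| ≤ b * ∫ ω, |(μ[Xc|m₂]) ω| ∂μ := by
    refine (abs_integral_le _).trans ?_
    rw [← integral_const_mul]
    refine integral_mono hmulint.abs (integrable_condExp.abs.const_mul _) fun ω => ?_
    show |Y ω * (μ[Xc|m₂]) ω| ≤ b * |(μ[Xc|m₂]) ω|
    rw [abs_mul]
    exact mul_le_mul_of_nonneg_right (hYb ω) (abs_nonneg _)
  refine habs.trans ?_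
  obtain ⟨B, hB, hBeq⟩ := integral_abs_condexp hm₂ hXc_int
  have hB0 : MeasurableSet[m0] B := hm₂ _ hB
  have hXcB : ∀ (s : Set Ω'), MeasurableSet[m0] s →
      ∫ ω in s, Xc ω ∂μ = (μ (A ∩ s)).toReal - (μ A).toReal * (μ s).toReal := by
    intro s hs
    rw [hXcdef]
    rw [integral_sub ((integrable_const (1:ℝ)).indicator hA).integrableOn
      (integrable_const _).integrableOn]
    rw [setIntegral_indicator hA, setIntegral_const, setIntegral_const]
    simp only [smul_eq_mul, mul_one]
    rw [Set.inter_comm]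
    simp only [measureReal_def]
    ring
  rw [hBeq, hXcB B hB0, hXcB Bᶜ hB0.compl]
  have e1 := abs_le.mp (hα B hB)
  have e2 := abs_le.mp (hα Bᶜ hB.compl)
  have hsum : ((μ (A ∩ B)).toReal - (μ A).toReal * (μ B).toReal) -
      ((μ (A ∩ Bᶜ)).toReal - (μ A).toReal * (μ Bᶜ).toReal) ≤ α + α := by linarith
  have := mul_le_mul_of_nonneg_left hsum hb0
  linarith

lemma cov_bdd_le {Ω' : Type*} {m₁ m₂ : MeasurableSpace Ω'} {m0 : MeasurableSpace Ω'}
    {μ : Measure Ω'} [IsProbabilityMeasure μ] (hm₁ : m₁ ≤ m0) (hm₂ : m₂ ≤ m0)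
    {X Y : Ω' → ℝ} (hX : StronglyMeasurable[m₁] X) (hY : StronglyMeasurable[m₂] Y)
    {a b : ℝ} (hXa : ∀ ω, |X ω| ≤ a) (hYb : ∀ ω, |Y ω| ≤ b)
    {α : ℝ}
    (hα : ∀ A B : Set Ω', MeasurableSet[m₁] A → MeasurableSet[m₂] B →
      |(μ (A ∩ B)).toReal - (μ A).toReal * (μ B).toReal| ≤ α) :
    |(∫ ω, X ω * Y ω ∂μ) - (∫ ω, X ω ∂μ) * ∫ ω, Y ω ∂μ| ≤ 4 * (a * b) * α := by
  obtain ⟨ω₀⟩ := nonempty_of_prob μ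
  have ha0 : 0 ≤ a := (abs_nonneg _).trans (hXa ω₀)
  have hb0 : 0 ≤ b := (abs_nonneg _).trans (hYb ω₀)
  have hαnn : 0 ≤ α := (abs_nonneg _).trans (hα ∅ ∅ (@MeasurableSet.empty _ m₁)
    (@MeasurableSet.empty _ m₂))
  have hXint : Integrable X μ := integrable_of_bdd (hX.mono hm₁).aestronglyMeasurable hXa
  have hYint : Integrable Y μ := integrable_of_bdd (hY.mono hm₂).aestronglyMeasurable hYb
  set c : ℝ := ∫ ω, Y ω ∂μ with hc
  have hcb : |c| ≤ b := by
    refine (abs_integral_le _).trans ?_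
    calc ∫ ω, |Y ω| ∂μ ≤ ∫ _ω, b ∂μ := integral_mono hYint.abs (integrable_const b) hYb
      _ = b := by simp
  set Yc : Ω' → ℝ := fun ω => Y ω - c with hYcdef
  have hYc_meas : StronglyMeasurable[m₂] Yc := hY.sub stronglyMeasurable_const
  have hYc_bdd : ∀ ω, |Yc ω| ≤ b + b := fun ω =>
    (abs_sub (Y ω) c).trans (add_le_add (hYb ω) hcb)
  have hYc_int : Integrable Yc μ := hYint.sub (integrable_const c)
  have hprod_int : Integrable (X * Yc) μ := by
    refine integrable_of_bdd ((hX.mono hm₁).aestronglyMeasurable.mul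
      (hYc_meas.mono hm₂).aestronglyMeasurable) (c := a * (b + b)) ?_
    intro ω
    rw [Pi.mul_apply, abs_mul]
    exact mul_le_mul (hXa ω) (hYc_bdd ω) (abs_nonneg _) ha0
  have hXY_int : Integrable (fun ω => X ω * Y ω) μ := by
    refine integrable_of_bdd ((hX.mono hm₁).aestronglyMeasurable.mul
      (hY.mono hm₂).aestronglyMeasurable) (c := a * b) ?_
    intro ω
    rw [abs_mul]
    exact mul_le_mul (hXa ω) (hYb ω) (abs_nonneg _) ha0
  have hkey : (∫ ω, X ω * Y ω ∂μ) - (∫ ω, X ω ∂μ) * c = ∫ ω, (X * Yc) ω ∂μ := by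
    have hptw : ∀ ω, (X * Yc) ω = X ω * Y ω - c * X ω := fun ω => by
      simp only [Pi.mul_apply, hYcdef]; ring
    rw [integral_congr_ae (Filter.Eventually.of_forall hptw),
      integral_sub hXY_int (hXint.const_mul c), integral_const_mul]
    ring
  rw [hkey]
  haveI : SigmaFinite (μ.trim hm₁) := by infer_instance
  have hpull : ∫ ω, (X * Yc) ω ∂μ = ∫ ω, X ω * (μ[Yc|m₁]) ω ∂μ := by
    rw [← integral_condExp (μ := μ) (f := X * Yc) hm₁]
    exact integral_congr_ae (condExp_mul_of_stronglyMeasurable_left hX hprod_int hYc_int)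
  rw [hpull]
  have hmulint : Integrable (fun ω => X ω * (μ[Yc|m₁]) ω) μ :=
    Integrable.bdd_mul (c := a) integrable_condExp (hX.mono hm₁).aestronglyMeasurable
      (Filter.Eventually.of_forall fun ω => by simpa [Real.norm_eq_abs] using hXa ω)
  have habs : |∫ ω, X ω * (μ[Yc|m₁]) ω ∂μ| ≤ a * ∫ ω, |(μ[Yc|m₁]) ω| ∂μ := by
    refine (abs_integral_le _).trans ?_
    rw [← integral_const_mul]
    refine integral_mono hmulint.abs (integrable_condExp.abs.const_mul _) fun ω => ?_
    show |X ω * (μ[Yc|m₁]) ω| ≤ a * |(μ[Yc|m₁]) ω|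
    rw [abs_mul]
    exact mul_le_mul_of_nonneg_right (hXa ω) (abs_nonneg _)
  refine habs.trans ?_
  obtain ⟨A, hA, hAeq⟩ := integral_abs_condexp hm₁ hYc_int
  have hA0 : MeasurableSet[m0] A := hm₁ _ hA
  have hsetYc : ∀ (s : Set Ω'), MeasurableSet[m0] s →
      ∫ ω in s, Yc ω ∂μ = (∫ ω in s, Y ω ∂μ) - (μ s).toReal * c := by
    intro s hs
    rw [hYcdef, integral_sub hYint.integrableOn (integrable_const c).integrableOn,
      setIntegral_const]
    simp [measureReal_def]
  have hcov : ∀ (s : Set Ω'), MeasurableSet[m₁] s →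
      |∫ ω in s, Yc ω ∂μ| ≤ 2 * b * α := by
    intro s hs
    rw [hsetYc s (hm₁ _ hs), hc]
    exact cov_indicator_le hm₂ hY hYb s (hm₁ _ hs) (fun B hB => hα s B hs hB)
  rw [hAeq]
  have e1 := abs_le.mp (hcov A hA)
  have e2 := abs_le.mp (hcov Aᶜ hA.compl)
  have hsum : (∫ ω in A, Yc ω ∂μ) - ∫ ω in Aᶜ, Yc ω ∂μ ≤ 4 * b * α := by linarith
  have := mul_le_mul_of_nonneg_left hsum ha0
  linarith

end Aux


section TruncFacts

/-- Truncation at level `M`. -/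
noncomputable def trunc (M x : ℝ) : ℝ := max (-M) (min M x)

lemma trunc_continuous (M : ℝ) : Continuous (trunc M) :=
  continuous_const.max (continuous_const.min continuous_id)

lemma trunc_abs_le (M : ℝ) (hM : 0 ≤ M) (x : ℝ) : |trunc M x| ≤ M := by
  rw [abs_le, trunc]
  constructor
  · exact le_max_left _ _
  · exact max_le (by linarith) (min_le_left _ _)

lemma trunc_abs_le_abs (M : ℝ) (hM : 0 ≤ M) (x : ℝ) : |trunc M x| ≤ |x| := by
  rw [abs_le, trunc]
  constructor
  · refine le_max_of_le_right (le_min ?_ ?_)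
    · linarith [abs_nonneg x]
    · exact neg_abs_le x
  · exact max_le (by linarith [abs_nonneg x]) ((min_le_right _ _).trans (le_abs_self x))

lemma trunc_eq_of_abs_le {M x : ℝ} (h : |x| ≤ M) : trunc M x = x := by
  rw [abs_le] at h
  rw [trunc, min_eq_right h.2, max_eq_right h.1]

lemma trunc_neg (M : ℝ) (hM : 0 ≤ M) (x : ℝ) : trunc M (-x) = -trunc M x := by
  rw [trunc, trunc, min_def, min_def, max_def, max_def]
  split_ifs <;> linarith

lemma sub_trunc_abs_le (M : ℝ) (hM : 0 ≤ M) (x : ℝ) : |x - trunc M x| ≤ |x| := by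
  rw [abs_sub_le_iff]
  constructor
  · have h1 : min M x ≤ trunc M x := le_max_right _ _
    rcases le_total M x with h | h
    · rw [min_eq_left h] at h1
      have := le_abs_self x
      linarith
    · rw [min_eq_right h] at h1
      linarith [abs_nonneg x]
  · have h2 : trunc M x ≤ max (-M) x := max_le_max le_rfl (min_le_right _ _)
    rcases le_total (-M) x with h | h
    · rw [max_eq_right h] at h2
      linarith [abs_nonneg x]
    · rw [max_eq_left h] at h2
      have := neg_abs_le x
      linarith

lemma sq_mul_sub_trunc_le (M : ℝ) (hM : 0 < M) (x : ℝ) :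
    M ^ 2 * |x - trunc M x| ≤ |x| ^ 3 := by
  rcases le_total (|x|) M with h | h
  · rw [trunc_eq_of_abs_le h, sub_self, abs_zero, mul_zero]
    positivity
  · have h1 : |x - trunc M x| ≤ |x| := sub_trunc_abs_le M hM.le x
    have h2 : M ^ 2 ≤ |x| ^ 2 := by
      have := abs_nonneg x
      nlinarith
    calc M ^ 2 * |x - trunc M x| ≤ |x| ^ 2 * |x| :=
        mul_le_mul h2 h1 (abs_nonneg _) (by positivity)
      _ = |x| ^ 3 := by ring

lemma cube_mul_le (x y : ℝ) (hx : 0 ≤ x) (hy : 0 ≤ y) : x ^ 3 * y ≤ x ^ 4 + y ^ 4 := by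
  rcases le_total y x with h | h
  · calc x ^ 3 * y ≤ x ^ 3 * x := mul_le_mul_of_nonneg_left h (by positivity)
      _ = x ^ 4 := by ring
      _ ≤ x ^ 4 + y ^ 4 := le_add_of_nonneg_right (by positivity)
  · calc x ^ 3 * y ≤ y ^ 3 * y := mul_le_mul_of_nonneg_right (pow_le_pow_left₀ hx h 3) hy
      _ = y ^ 4 := by ring
      _ ≤ x ^ 4 + y ^ 4 := le_add_of_nonneg_left (by positivity)

lemma prod_sub_trunc_prod_le (M : ℝ) (hM : 0 < M) (x y : ℝ) :
    |x * y - trunc M x * trunc M y| ≤ 2 / M ^ 2 * (|x| ^ 4 + |y| ^ 4) := by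
  have key : |x * y - trunc M x * trunc M y| ≤
      (|x| ^ 3 * |y| + |x| * |y| ^ 3) / M ^ 2 := by
    have h1 : x * y - trunc M x * trunc M y
        = (x - trunc M x) * y + trunc M x * (y - trunc M y) := by ring
    rw [h1]
    refine (abs_add_le _ _).trans ?_
    rw [abs_mul, abs_mul]
    have e1 : |x - trunc M x| * |y| ≤ (|x| ^ 3 / M ^ 2) * |y| := by
      refine mul_le_mul_of_nonneg_right ?_ (abs_nonneg _)
      rw [le_div_iff₀ (by positivity), mul_comm]
      exact sq_mul_sub_trunc_le M hM x
    have e2 : |trunc M x| * |y - trunc M y| ≤ |x| * (|y| ^ 3 / M ^ 2) := by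
      refine mul_le_mul (trunc_abs_le_abs M hM.le x) ?_ (abs_nonneg _) (abs_nonneg _)
      rw [le_div_iff₀ (by positivity), mul_comm]
      exact sq_mul_sub_trunc_le M hM y
    calc |x - trunc M x| * |y| + |trunc M x| * |y - trunc M y|
        ≤ (|x| ^ 3 / M ^ 2) * |y| + |x| * (|y| ^ 3 / M ^ 2) := add_le_add e1 e2
      _ = (|x| ^ 3 * |y| + |x| * |y| ^ 3) / M ^ 2 := by ring
  refine key.trans ?_
  have c1 : |x| ^ 3 * |y| ≤ |x| ^ 4 + |y| ^ 4 := cube_mul_le _ _ (abs_nonneg _) (abs_nonneg _)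
  have c2 : |x| * |y| ^ 3 ≤ |x| ^ 4 + |y| ^ 4 := by
    have := cube_mul_le (|y|) (|x|) (abs_nonneg _) (abs_nonneg _)
    nlinarith
  have hc : |x| ^ 3 * |y| + |x| * |y| ^ 3 ≤ 2 * (|x| ^ 4 + |y| ^ 4) := by linarith
  calc (|x| ^ 3 * |y| + |x| * |y| ^ 3) / M ^ 2 ≤ 2 * (|x| ^ 4 + |y| ^ 4) / M ^ 2 :=
      (div_le_div_iff_of_pos_right (by positivity)).mpr hc
    _ = 2 / M ^ 2 * (|x| ^ 4 + |y| ^ 4) := by ring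

end TruncFacts

/-- for every `0 < w < v` there is `C_w > 0` such that for all `k ≤ i < j`,
`E[|E[U_i U_j | 𝓕_k]|] ≤ C_w (j − i)^(−w/2)`. -/
theorem condexp_product_decay
    {Ω : Type*} [MeasureSpace Ω] [IsProbabilityMeasure (ℙ : Measure Ω)]
    (U : ℕ → Ω → ℝ)
    (hMeas : ∀ i, Measurable (U i))
    (hStat : ∀ k n : ℕ,
      Measure.map (fun ω => fun i : Fin (n + 1) => U (k + i) ω) ℙ
        = Measure.map (fun ω => fun i : Fin (n + 1) => U i ω) ℙ)
    (hSymm : Measure.map (U 0) ℙ = Measure.map (fun ω => -U 0 ω) ℙ)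
    (hMom : ∀ p : ℕ, 1 ≤ p → Integrable (fun ω => |U 0 ω| ^ p) ℙ)
    (C v : ℝ) (hC : 0 < C)
    (hMix : ∀ k h : ℕ, 1 ≤ h → ∀ A B : Set Ω,
      MeasurableSet[pastSigma U k] A → MeasurableSet[futureSigma U (k + h)] B →
      |(ℙ (A ∩ B)).toReal - (ℙ A).toReal * (ℙ B).toReal| ≤ C * (h : ℝ) ^ (-v))
    (hv : 0 < v) :
    ∀ w : ℝ, 0 < w → w < v → ∃ Cw > (0 : ℝ), ∀ k i j : ℕ, k ≤ i → i < j →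
      ∫ ω, |(ℙ[fun ω' => U i ω' * U j ω' | pastSigma U k]) ω| ∂ℙ
        ≤ Cw * ((j : ℝ) - (i : ℝ)) ^ (-(w / 2)) := by
  intro w hw hwv
  classical
  have hmom4 : Integrable (fun ω => |U 0 ω| ^ 4) ℙ := hMom 4 (by norm_num)
  have hmom2 : Integrable (fun ω => |U 0 ω| ^ 2) ℙ := hMom 2 (by norm_num)
  -- one-dimensional stationarity
  have hlaw : ∀ n, Measure.map (U n) ℙ = Measure.map (U 0) ℙ := by
    intro n
    have h := hStat n 0
    have hF : Measurable (fun ω => fun t : Fin 1 => U (n + ↑t) ω) :=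
      measurable_pi_lambda _ fun t => hMeas _
    have hG : Measurable (fun ω => fun t : Fin 1 => U (↑t : ℕ) ω) :=
      measurable_pi_lambda _ fun t => hMeas _
    have h0 := congrArg (Measure.map (fun g : Fin 1 → ℝ => g 0)) h
    rw [Measure.map_map (measurable_pi_apply 0) hF,
        Measure.map_map (measurable_pi_apply 0) hG] at h0
    have e1 : ((fun g : Fin 1 → ℝ => g 0) ∘ (fun ω => fun t : Fin 1 => U (n + ↑t) ω)) = U n := by
      funext ω; simp
    have e2 : ((fun g : Fin 1 → ℝ => g 0) ∘ (fun ω => fun t : Fin 1 => U (↑t : ℕ) ω)) = U 0 := by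
      funext ω; simp
    rwa [e1, e2] at h0
  -- transfer of integrability and integrals along stationarity
  have htrans : ∀ (φ : ℝ → ℝ), Measurable φ → Integrable (fun ω => φ (U 0 ω)) ℙ →
      ∀ n, Integrable (fun ω => φ (U n ω)) ℙ ∧
        ∫ ω, φ (U n ω) ∂ℙ = ∫ ω, φ (U 0 ω) ∂ℙ := by
    intro φ hφ h0 n
    have h1 : Integrable φ (Measure.map (U n) ℙ) := by
      rw [hlaw n]
      exact (integrable_map_measure hφ.aestronglyMeasurable (hMeas 0).aemeasurable).mpr h0
    refine ⟨(integrable_map_measure hφ.aestronglyMeasurable (hMeas n).aemeasurable).mp h1, ?_⟩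
    rw [← integral_map (hMeas n).aemeasurable hφ.aestronglyMeasurable, hlaw n,
      integral_map (hMeas 0).aemeasurable hφ.aestronglyMeasurable]
  have h4meas : Measurable (fun x : ℝ => |x| ^ 4) := measurable_id.abs.pow_const 4
  have h2meas : Measurable (fun x : ℝ => |x| ^ 2) := measurable_id.abs.pow_const 2
  set K4 : ℝ := ∫ ω, |U 0 ω| ^ 4 ∂ℙ with hK4def
  have hK4nn : 0 ≤ K4 := integral_nonneg fun ω => by positivity
  refine ⟨4 * C + 4 * K4 + 1, by linarith, ?_⟩
  intro k i j hki hij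
  obtain ⟨h, hh1, rfl⟩ : ∃ h, 1 ≤ h ∧ j = i + h := ⟨j - i, by omega, by omega⟩
  have hR1 : (1:ℝ) ≤ (h:ℝ) := by exact_mod_cast hh1
  have hR0 : (0:ℝ) < (h:ℝ) := by linarith
  set M : ℝ := (h:ℝ) ^ (v / 4) with hMdef
  have hM1 : 1 ≤ M := Real.one_le_rpow hR1 (by positivity)
  have hM0 : 0 < M := lt_of_lt_of_le one_pos hM1
  -- σ-algebra facts
  have hpast_le : ∀ n, pastSigma U n ≤ (inferInstance : MeasurableSpace Ω) :=
    fun n => iSup_le fun t => measurable_iff_comap_le.mp (hMeas _)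
  have hfut_le : ∀ n, futureSigma U n ≤ (inferInstance : MeasurableSpace Ω) :=
    fun n => iSup_le fun t => measurable_iff_comap_le.mp (hMeas _)
  have hpast_mono : pastSigma U k ≤ pastSigma U i :=
    iSup_le fun t => le_iSup_of_le (⟨(t : ℕ), lt_of_lt_of_le t.isLt (by omega)⟩ : Fin (i+1)) le_rfl
  have hUi_past : Measurable[pastSigma U i] (U i) :=
    measurable_iff_comap_le.mpr (le_iSup (fun t : Fin (i+1) =>
      MeasurableSpace.comap (U (t : ℕ)) inferInstance) (⟨i, by omega⟩ : Fin (i+1)))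
  have hUj_fut : Measurable[futureSigma U (i + h)] (U (i + h)) :=
    measurable_iff_comap_le.mpr (le_iSup (fun t : ℕ =>
      MeasurableSpace.comap (U (i + h + t)) inferInstance) 0)
  -- integrability of the product
  have hint2 := fun n => htrans (fun x => |x| ^ 2) h2meas hmom2 n
  have hint4 := fun n => htrans (fun x => |x| ^ 4) h4meas hmom4 n
  set f : Ω → ℝ := fun ω => U i ω * U (i + h) ω with hfdef
  have hf : Integrable f ℙ := by
    refine Integrable.mono' ((hint2 i).1.add (hint2 (i+h)).1)
      ((hMeas i).mul (hMeas (i+h))).aestronglyMeasurable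
      (Filter.Eventually.of_forall fun ω => ?_)
    show ‖U i ω * U (i + h) ω‖ ≤ |U i ω| ^ 2 + |U (i + h) ω| ^ 2
    rw [Real.norm_eq_abs, abs_mul]
    nlinarith [sq_nonneg (|U i ω| - |U (i+h) ω|), abs_nonneg (U i ω), abs_nonneg (U (i+h) ω)]
  -- reduce conditional expectation to a signed integral
  have hm := hpast_le k
  obtain ⟨A, hA, hAeq⟩ := integral_abs_condexp hm hf
  rw [hAeq]
  have hA0 : MeasurableSet A := hm _ hA
  set η : Ω → ℝ := A.piecewise (fun _ => 1) (fun _ => -1) with hηdef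
  have hη_measK : Measurable[pastSigma U k] η :=
    Measurable.piecewise hA measurable_const measurable_const
  have hη_meas : Measurable η := hη_measK.mono hm le_rfl
  have hη_bdd : ∀ ω, |η ω| ≤ 1 := by
    intro ω
    by_cases hω : ω ∈ A <;> simp [hηdef, Set.piecewise, hω]
  have hηf_int : Integrable (fun ω => η ω * f ω) ℙ :=
    hf.bdd_mul (c := 1) hη_meas.aestronglyMeasurable
      (Filter.Eventually.of_forall fun ω => by simpa [Real.norm_eq_abs] using hη_bdd ω)
  have hstep1 : (∫ ω in A, f ω ∂ℙ) - ∫ ω in Aᶜ, f ω ∂ℙ = ∫ ω, η ω * f ω ∂ℙ := by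
    rw [← integral_add_compl hA0 hηf_int]
    have e1 : ∫ ω in A, η ω * f ω ∂ℙ = ∫ ω in A, f ω ∂ℙ :=
      setIntegral_congr_fun hA0 fun ω hω => by
        simp [hηdef, Set.piecewise_eq_of_mem _ _ _ hω]
    have e2 : ∫ ω in Aᶜ, η ω * f ω ∂ℙ = ∫ ω in Aᶜ, (- f ω) ∂ℙ :=
      setIntegral_congr_fun hA0.compl fun ω hω => by
        simp [hηdef, Set.piecewise_eq_of_notMem _ _ _ hω]
    rw [e1, e2, integral_neg]
    ring
  rw [hstep1]
  -- truncated variables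
  have hτcont : Continuous (trunc M) := trunc_continuous M
  have hτmeas : Measurable (trunc M) := hτcont.measurable
  set X : Ω → ℝ := fun ω => η ω * trunc M (U i ω) with hXdef
  set Y : Ω → ℝ := fun ω => trunc M (U (i + h) ω) with hYdef
  have hX_meas : Measurable[pastSigma U i] X :=
    (hη_measK.mono hpast_mono le_rfl).mul (hτmeas.comp hUi_past)
  have hY_meas : Measurable[futureSigma U (i + h)] Y := hτmeas.comp hUj_fut
  have hX_bdd : ∀ ω, |X ω| ≤ M := by
    intro ω
    show |η ω * trunc M (U i ω)| ≤ M
    rw [abs_mul]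
    calc |η ω| * |trunc M (U i ω)| ≤ 1 * M :=
        mul_le_mul (hη_bdd ω) (trunc_abs_le M hM0.le _) (abs_nonneg _) zero_le_one
      _ = M := one_mul M
  have hY_bdd : ∀ ω, |Y ω| ≤ M := fun ω => trunc_abs_le M hM0.le _
  -- mean of Y vanishes by symmetry
  have hτ0int : Integrable (fun ω => trunc M (U 0 ω)) ℙ :=
    integrable_of_bdd (hτmeas.comp (hMeas 0)).aestronglyMeasurable
      (fun ω => trunc_abs_le M hM0.le _)
  have hY0 : ∫ ω, Y ω ∂ℙ = 0 := by
    have h1 := (htrans (trunc M) hτmeas hτ0int (i + h)).2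
    have h2 : ∫ ω, trunc M (U 0 ω) ∂ℙ = ∫ ω, trunc M (-U 0 ω) ∂ℙ := by
      rw [← integral_map (hMeas 0).aemeasurable hτmeas.aestronglyMeasurable, hSymm,
        integral_map (φ := fun ω => -U 0 ω) (hMeas 0).neg.aemeasurable hτmeas.aestronglyMeasurable]
    have h3 : ∫ ω, trunc M (-U 0 ω) ∂ℙ = - ∫ ω, trunc M (U 0 ω) ∂ℙ := by
      rw [← integral_neg]
      exact integral_congr_ae (Filter.Eventually.of_forall fun ω => trunc_neg M hM0.le _)
    show ∫ ω, trunc M (U (i + h) ω) ∂ℙ = 0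
    rw [h1]
    linarith
  -- error term
  have hXY_int : Integrable (fun ω => X ω * Y ω) ℙ := integrable_of_bdd
    ((hX_meas.mono (hpast_le i) le_rfl).mul
      (hY_meas.mono (hfut_le (i+h)) le_rfl)).aestronglyMeasurable (c := M * M)
    (fun ω => by rw [abs_mul]; exact mul_le_mul (hX_bdd ω) (hY_bdd ω) (abs_nonneg _) hM0.le)
  set D : Ω → ℝ := fun ω => η ω * f ω - X ω * Y ω with hDdef
  have hD_int : Integrable D ℙ := hηf_int.sub hXY_int
  have hDptw : ∀ ω, |D ω| ≤ 2 / M ^ 2 * (|U i ω| ^ 4 + |U (i + h) ω| ^ 4) := by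
    intro ω
    have e : D ω = η ω * (U i ω * U (i+h) ω - trunc M (U i ω) * trunc M (U (i+h) ω)) := by
      show η ω * (U i ω * U (i + h) ω) - (η ω * trunc M (U i ω)) * trunc M (U (i+h) ω) = _
      ring
    rw [e, abs_mul]
    calc |η ω| * |U i ω * U (i+h) ω - trunc M (U i ω) * trunc M (U (i+h) ω)|
        ≤ 1 * |U i ω * U (i+h) ω - trunc M (U i ω) * trunc M (U (i+h) ω)| :=
          mul_le_mul_of_nonneg_right (hη_bdd ω) (abs_nonneg _)
      _ = |U i ω * U (i+h) ω - trunc M (U i ω) * trunc M (U (i+h) ω)| := one_mul _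
      _ ≤ 2 / M ^ 2 * (|U i ω| ^ 4 + |U (i+h) ω| ^ 4) :=
          prod_sub_trunc_prod_le M hM0 _ _
  have hg4_int : Integrable (fun ω => 2 / M ^ 2 * (|U i ω| ^ 4 + |U (i+h) ω| ^ 4)) ℙ :=
    ((hint4 i).1.add (hint4 (i+h)).1).const_mul _
  have hDabs : |∫ ω, D ω ∂ℙ| ≤ 4 / M ^ 2 * K4 := by
    refine (abs_integral_le _).trans ?_
    refine (integral_mono hD_int.abs hg4_int hDptw).trans ?_
    rw [integral_const_mul, integral_add (hint4 i).1 (hint4 (i+h)).1,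
      (hint4 i).2, (hint4 (i+h)).2]
    rw [← hK4def]
    apply le_of_eq
    ring
  -- covariance bound via mixing
  have hα : ∀ A' B : Set Ω, MeasurableSet[pastSigma U i] A' →
      MeasurableSet[futureSigma U (i+h)] B →
      |(ℙ (A' ∩ B)).toReal - (ℙ A').toReal * (ℙ B).toReal| ≤ C * (h:ℝ) ^ (-v) :=
    fun A' B hA' hB => hMix i h hh1 A' B hA' hB
  have hcov := cov_bdd_le (μ := (ℙ : Measure Ω)) (hpast_le i) (hfut_le (i+h))
    hX_meas.stronglyMeasurable hY_meas.stronglyMeasurable hX_bdd hY_bdd hα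
  rw [hY0, mul_zero, sub_zero] at hcov
  -- combine
  have hsplit : ∫ ω, η ω * f ω ∂ℙ = (∫ ω, D ω ∂ℙ) + ∫ ω, X ω * Y ω ∂ℙ := by
    rw [← integral_add hD_int hXY_int]
    refine integral_congr_ae (Filter.Eventually.of_forall fun ω => ?_)
    show η ω * f ω = (η ω * f ω - X ω * Y ω) + X ω * Y ω
    ring
  have hbound : ∫ ω, η ω * f ω ∂ℙ
      ≤ 4 / M ^ 2 * K4 + 4 * (M * M) * (C * (h:ℝ) ^ (-v)) := by
    rw [hsplit]
    have l1 : ∫ ω, D ω ∂ℙ ≤ 4 / M ^ 2 * K4 := (le_abs_self _).trans hDabs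
    have l2 : ∫ ω, X ω * Y ω ∂ℙ ≤ 4 * (M * M) * (C * (h:ℝ) ^ (-v)) :=
      (le_abs_self _).trans hcov
    linarith
  refine hbound.trans ?_
  -- arithmetic with exponents
  have hMM : M * M = (h:ℝ) ^ (v / 2) := by
    rw [hMdef, ← Real.rpow_add hR0]
    congr 1
    ring
  have hexp1 : (h:ℝ) ^ (v / 2) * (h:ℝ) ^ (-v) = (h:ℝ) ^ (-(v/2)) := by
    rw [← Real.rpow_add hR0]
    congr 1
    ring
  have hexp2 : 4 / M ^ 2 * K4 = 4 * K4 * (h:ℝ) ^ (-(v/2)) := by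
    rw [pow_two, hMM, Real.rpow_neg hR0.le]
    ring
  have hexp3 : (h:ℝ) ^ (-(v/2)) ≤ (h:ℝ) ^ (-(w/2)) :=
    Real.rpow_le_rpow_of_exponent_le hR1 (by linarith)
  have hrw0 : (0:ℝ) ≤ (h:ℝ) ^ (-(w/2)) := Real.rpow_nonneg hR0.le _
  have hrv0 : (0:ℝ) ≤ (h:ℝ) ^ (-(v/2)) := Real.rpow_nonneg hR0.le _
  have hcast : ((i + h : ℕ) : ℝ) - (i:ℝ) = (h:ℝ) := by push_cast; ring
  rw [hcast]
  calc 4 / M ^ 2 * K4 + 4 * (M * M) * (C * (h:ℝ) ^ (-v))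
      = 4 * K4 * (h:ℝ) ^ (-(v/2)) + 4 * C * ((h:ℝ) ^ (v/2) * (h:ℝ) ^ (-v)) := by
        rw [hexp2, hMM]; ring
    _ = (4 * K4 + 4 * C) * (h:ℝ) ^ (-(v/2)) := by rw [hexp1]; ring
    _ ≤ (4 * K4 + 4 * C) * (h:ℝ) ^ (-(w/2)) :=
        mul_le_mul_of_nonneg_left hexp3 (by linarith)
    _ ≤ (4 * C + 4 * K4 + 1) * (h:ℝ) ^ (-(w/2)) :=
        mul_le_mul_of_nonneg_right (by linarith) hrw0

end DepNoise
end

section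
/- Assume v > 2. There exists a constant C' > 0 such that for all integers n ≥ 1 and 1 ≤ j ≤ n, the sum over all pairs (i, i') with 0 ≤ i ≤ n−j, 0 ≤ i' ≤ n−j and i + j < i' of |E[(U_{i+j} − U_i)(U_{i'+j} − U_{i'})]| is at most C' n. -/
open MeasureTheory ProbabilityTheory Filter Finset
open scoped ProbabilityTheory ENNReal NNReal BigOperators

namespace DepNoise

variable {Ω : Type*} [MeasureSpace Ω]

section Aux


noncomputable def Ffun (t x : ℝ) : ℝ := (if t < x then 1 else 0) - (if x ≤ -t then 1 else 0)

lemma abs_Ffun_le_one (t x : ℝ) : |Ffun t x| ≤ 1 := by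
  unfold Ffun; split_ifs <;> norm_num

lemma measurable_Ffun : Measurable (fun p : ℝ × ℝ => Ffun p.1 p.2) := by
  unfold Ffun
  apply Measurable.sub
  · exact Measurable.ite (measurableSet_lt measurable_fst measurable_snd) measurable_const
      measurable_const
  · exact Measurable.ite (measurableSet_le measurable_snd (measurable_fst.neg)) measurable_const
      measurable_const

lemma ioc_indicator_integral (c M : ℝ) (hM : 0 ≤ M) :
    ∫ t in Set.Ioc 0 M, (Set.Iio c).indicator (fun _ => (1:ℝ)) t = max 0 (min M c) := by
  rw [setIntegral_indicator measurableSet_Iio, setIntegral_const, smul_eq_mul, mul_one]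
  rcases le_or_gt c M with h | h
  · have hset : Set.Ioc (0:ℝ) M ∩ Set.Iio c = Set.Ioo 0 c := by
      ext t; simp only [Set.mem_inter_iff, Set.mem_Ioc, Set.mem_Iio, Set.mem_Ioo]
      constructor
      · rintro ⟨⟨h1, _⟩, h3⟩; exact ⟨h1, h3⟩
      · rintro ⟨h1, h2⟩; exact ⟨⟨h1, le_trans (le_of_lt h2) h⟩, h2⟩
    rw [hset, measureReal_def, Real.volume_Ioo, sub_zero]
    rcases le_total 0 c with hx | hx
    · rw [min_eq_right h, max_eq_right hx, ENNReal.toReal_ofReal hx]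
    · rw [min_eq_right h, max_eq_left hx, ENNReal.ofReal_eq_zero.mpr hx, ENNReal.toReal_zero]
  · have hset : Set.Ioc (0:ℝ) M ∩ Set.Iio c = Set.Ioc 0 M := by
      ext t; simp only [Set.mem_inter_iff, Set.mem_Ioc, Set.mem_Iio]
      exact ⟨fun ⟨h1, _⟩ => h1, fun h1 => ⟨h1, lt_of_le_of_lt h1.2 h⟩⟩
    rw [hset, measureReal_def, Real.volume_Ioc, sub_zero, min_eq_left (le_of_lt h), max_eq_right hM,
      ENNReal.toReal_ofReal hM]

lemma ioc_indicator_integral' (c M : ℝ) (hM : 0 ≤ M) :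
    ∫ t in Set.Ioc 0 M, (Set.Iic c).indicator (fun _ => (1:ℝ)) t = max 0 (min M c) := by
  rw [setIntegral_indicator measurableSet_Iic, setIntegral_const, smul_eq_mul, mul_one]
  rcases le_or_gt M c with h | h
  · have hset : Set.Ioc (0:ℝ) M ∩ Set.Iic c = Set.Ioc 0 M := by
      ext t; simp only [Set.mem_inter_iff, Set.mem_Ioc, Set.mem_Iic]
      exact ⟨fun ⟨h1, _⟩ => h1, fun h1 => ⟨h1, le_trans h1.2 h⟩⟩
    rw [hset, measureReal_def, Real.volume_Ioc, sub_zero, min_eq_left h, max_eq_right hM,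
      ENNReal.toReal_ofReal hM]
  · have hset : Set.Ioc (0:ℝ) M ∩ Set.Iic c = Set.Ioc 0 c := by
      ext t; simp only [Set.mem_inter_iff, Set.mem_Ioc, Set.mem_Iic]
      constructor
      · rintro ⟨⟨h1, _⟩, h3⟩; exact ⟨h1, h3⟩
      · rintro ⟨h1, h2⟩; exact ⟨⟨h1, le_trans h2 (le_of_lt h)⟩, h2⟩
    rw [hset, measureReal_def, Real.volume_Ioc, sub_zero, min_eq_right (le_of_lt h)]
    rcases le_total 0 c with hx | hx
    · rw [max_eq_right hx, ENNReal.toReal_ofReal hx]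
    · rw [max_eq_left hx, ENNReal.ofReal_eq_zero.mpr hx, ENNReal.toReal_zero]

lemma integral_Ffun (x M : ℝ) (hM : 0 ≤ M) :
    ∫ t in Set.Ioc 0 M, Ffun t x = max (-M) (min M x) := by
  haveI : IsFiniteMeasure (volume.restrict (Set.Ioc (0:ℝ) M)) :=
    ⟨by rw [Measure.restrict_apply_univ]; exact measure_Ioc_lt_top⟩
  unfold Ffun
  have h1 : ∀ t : ℝ, (if t < x then (1:ℝ) else 0) = (Set.Iio x).indicator (fun _ => (1:ℝ)) t := by
    intro t; simp [Set.indicator_apply, Set.mem_Iio]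
  have h2 : ∀ t : ℝ, (if x ≤ -t then (1:ℝ) else 0)
      = (Set.Iic (-x)).indicator (fun _ => (1:ℝ)) t := by
    intro t
    have hiff : x ≤ -t ↔ t ≤ -x := by constructor <;> intro h <;> linarith
    simp [Set.indicator_apply, Set.mem_Iic, hiff]
  have int1 : Integrable ((Set.Iio x).indicator (fun _ => (1:ℝ)))
      (volume.restrict (Set.Ioc (0:ℝ) M)) :=
    (integrable_const (1:ℝ)).indicator measurableSet_Iio
  have int2 : Integrable ((Set.Iic (-x)).indicator (fun _ => (1:ℝ)))
      (volume.restrict (Set.Ioc (0:ℝ) M)) :=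
    (integrable_const (1:ℝ)).indicator measurableSet_Iic
  simp only [h1, h2]
  rw [integral_sub int1 int2, ioc_indicator_integral x M hM, ioc_indicator_integral' (-x) M hM]
  rcases le_total 0 x with hx | hx
  · have h5 : min M (-x) ≤ 0 := le_trans (min_le_right _ _) (by linarith)
    have h6 : (0:ℝ) ≤ min M x := le_min hM hx
    rw [max_eq_left h5, sub_zero, max_eq_right h6, max_eq_right (by linarith : -M ≤ min M x)]
  · have h3 : min M x = x := min_eq_right (le_trans hx hM)
    have h5 : (0:ℝ) ≤ min M (-x) := le_min hM (by linarith)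
    rw [h3, max_eq_left hx, zero_sub, max_eq_right h5]
    rcases le_total (-x) M with h4 | h4
    · rw [min_eq_right h4, neg_neg, max_eq_right (by linarith : -M ≤ x)]
    · rw [min_eq_left h4, max_eq_left (by linarith : x ≤ -M)]



section Helpers
variable {Ω : Type*} [MeasurableSpace Ω]

lemma integrable_ind (μ : Measure Ω) [IsFiniteMeasure μ] {A : Set Ω}
    (hA : MeasurableSet A) : Integrable (A.indicator (fun _ => (1:ℝ))) μ :=
  (integrable_const (1:ℝ)).indicator hA

lemma integral_ind (μ : Measure Ω) [IsFiniteMeasure μ] {A : Set Ω}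
    (hA : MeasurableSet A) : ∫ ω, A.indicator (fun _ => (1:ℝ)) ω ∂μ = (μ A).toReal := by
  rw [integral_indicator_const _ hA, smul_eq_mul, mul_one, measureReal_def]

lemma ind_mul_ind (A B : Set Ω) (ω : Ω) :
    A.indicator (fun _ => (1:ℝ)) ω * B.indicator (fun _ => (1:ℝ)) ω
      = (A ∩ B).indicator (fun _ => (1:ℝ)) ω := by
  by_cases h1 : ω ∈ A <;> by_cases h2 : ω ∈ B <;>
    simp [Set.indicator_apply, h1, h2, Set.mem_inter_iff]

lemma integral_ind_mul (μ : Measure Ω) [IsFiniteMeasure μ] {A B : Set Ω}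
    (hA : MeasurableSet A) (hB : MeasurableSet B) :
    ∫ ω, A.indicator (fun _ => (1:ℝ)) ω * B.indicator (fun _ => (1:ℝ)) ω ∂μ
      = (μ (A ∩ B)).toReal := by
  simp only [ind_mul_ind]; exact integral_ind μ (hA.inter hB)

lemma abs_add_four {a b c d α : ℝ} (ha : |a| ≤ α) (hb : |b| ≤ α) (hc : |c| ≤ α)
    (hd : |d| ≤ α) : |a + b + c + d| ≤ 4 * α := by
  calc |a + b + c + d| ≤ |a + b + c| + |d| := abs_add_le _ _
    _ ≤ (|a + b| + |c|) + |d| := by gcongr; exact abs_add_le _ _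
    _ ≤ ((|a| + |b|) + |c|) + |d| := by gcongr; exact abs_add_le _ _
    _ ≤ 4 * α := by linarith

end Helpers

lemma Ffun_product_bound {Ω : Type*} [MeasureSpace Ω] [IsProbabilityMeasure (ℙ : Measure Ω)]
    {m₁ m₂ : MeasurableSpace Ω} (h₁ : m₁ ≤ MeasureSpace.toMeasurableSpace)
    (h₂ : m₂ ≤ MeasureSpace.toMeasurableSpace) {X Y : Ω → ℝ}
    (hX : Measurable[m₁] X) (hY : Measurable[m₂] Y) {α : ℝ}
    (hsets : ∀ A B : Set Ω, MeasurableSet[m₁] A → MeasurableSet[m₂] B →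
      |(ℙ (A ∩ B)).toReal - (ℙ A).toReal * (ℙ B).toReal| ≤ α) (t s : ℝ) :
    |(∫ ω, Ffun t (X ω) * Ffun s (Y ω) ∂ℙ)
      - (∫ ω, Ffun t (X ω) ∂ℙ) * (∫ ω, Ffun s (Y ω) ∂ℙ)| ≤ 4 * α := by
  set A := X ⁻¹' Set.Ioi t with hAdef
  set A' := X ⁻¹' Set.Iic (-t) with hA'def
  set B := Y ⁻¹' Set.Ioi s with hBdef
  set B' := Y ⁻¹' Set.Iic (-s) with hB'def
  have hAm : MeasurableSet[m₁] A := hX measurableSet_Ioi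
  have hA'm : MeasurableSet[m₁] A' := hX measurableSet_Iic
  have hBm : MeasurableSet[m₂] B := hY measurableSet_Ioi
  have hB'm : MeasurableSet[m₂] B' := hY measurableSet_Iic
  have hA : MeasurableSet[MeasureSpace.toMeasurableSpace] A := h₁ _ hAm
  have hA' : MeasurableSet[MeasureSpace.toMeasurableSpace] A' := h₁ _ hA'm
  have hB : MeasurableSet[MeasureSpace.toMeasurableSpace] B := h₂ _ hBm
  have hB' : MeasurableSet[MeasureSpace.toMeasurableSpace] B' := h₂ _ hB'm
  have b1 := hsets A B hAm hBm
  have b2 := hsets A B' hAm hB'm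
  have b3 := hsets A' B hA'm hBm
  have b4 := hsets A' B' hA'm hB'm
  clear hsets hX hY hAm hA'm hBm hB'm h₁ h₂
  clear m₁ m₂
  have hFX : ∀ ω, Ffun t (X ω)
      = A.indicator (fun _ => (1:ℝ)) ω - A'.indicator (fun _ => (1:ℝ)) ω := by
    intro ω
    by_cases h1 : t < X ω <;> by_cases h2 : X ω ≤ -t <;>
      simp [Ffun, hAdef, hA'def, Set.indicator_apply, Set.mem_preimage, h1, h2]
  have hFY : ∀ ω, Ffun s (Y ω)
      = B.indicator (fun _ => (1:ℝ)) ω - B'.indicator (fun _ => (1:ℝ)) ω := by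
    intro ω
    by_cases h1 : s < Y ω <;> by_cases h2 : Y ω ≤ -s <;>
      simp [Ffun, hBdef, hB'def, Set.indicator_apply, Set.mem_preimage, h1, h2]
  have hprod : ∀ ω, Ffun t (X ω) * Ffun s (Y ω)
      = A.indicator (fun _ => (1:ℝ)) ω * B.indicator (fun _ => (1:ℝ)) ω
        - A.indicator (fun _ => (1:ℝ)) ω * B'.indicator (fun _ => (1:ℝ)) ω
        - A'.indicator (fun _ => (1:ℝ)) ω * B.indicator (fun _ => (1:ℝ)) ω
        + A'.indicator (fun _ => (1:ℝ)) ω * B'.indicator (fun _ => (1:ℝ)) ω := by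
    intro ω; rw [hFX ω, hFY ω]; ring
  have hi : ∀ (S T : Set Ω), MeasurableSet S → MeasurableSet T →
      Integrable (fun ω => S.indicator (fun _ => (1:ℝ)) ω * T.indicator (fun _ => (1:ℝ)) ω)
        ℙ := by
    intro S T hS hT
    simp only [ind_mul_ind]; exact integrable_ind ℙ (hS.inter hT)
  have I1 := hi A B hA hB
  have I2 := hi A B' hA hB'
  have I3 := hi A' B hA' hB
  have I4 := hi A' B' hA' hB'
  have I12 : Integrable (fun ω => A.indicator (fun _ => (1:ℝ)) ω * B.indicator (fun _ => (1:ℝ)) ω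
      - A.indicator (fun _ => (1:ℝ)) ω * B'.indicator (fun _ => (1:ℝ)) ω) ℙ := I1.sub I2
  have I123 : Integrable (fun ω =>
      A.indicator (fun _ => (1:ℝ)) ω * B.indicator (fun _ => (1:ℝ)) ω
      - A.indicator (fun _ => (1:ℝ)) ω * B'.indicator (fun _ => (1:ℝ)) ω
      - A'.indicator (fun _ => (1:ℝ)) ω * B.indicator (fun _ => (1:ℝ)) ω) ℙ := I12.sub I3
  have e1 : ∫ ω, Ffun t (X ω) * Ffun s (Y ω) ∂ℙ
      = (ℙ (A ∩ B)).toReal - (ℙ (A ∩ B')).toReal - (ℙ (A' ∩ B)).toReal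
        + (ℙ (A' ∩ B')).toReal := by
    simp only [hprod]
    rw [integral_add I123 I4, integral_sub I12 I3, integral_sub I1 I2,
      integral_ind_mul ℙ hA hB, integral_ind_mul ℙ hA hB', integral_ind_mul ℙ hA' hB,
      integral_ind_mul ℙ hA' hB']
  have e2 : ∫ ω, Ffun t (X ω) ∂ℙ = (ℙ A).toReal - (ℙ A').toReal := by
    simp only [hFX]
    rw [integral_sub (integrable_ind ℙ hA) (integrable_ind ℙ hA'),
      integral_ind ℙ hA, integral_ind ℙ hA']
  have e3 : ∫ ω, Ffun s (Y ω) ∂ℙ = (ℙ B).toReal - (ℙ B').toReal := by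
    simp only [hFY]
    rw [integral_sub (integrable_ind ℙ hB) (integrable_ind ℙ hB'),
      integral_ind ℙ hB, integral_ind ℙ hB']
  rw [e1, e2, e3]
  have key : (ℙ (A ∩ B)).toReal - (ℙ (A ∩ B')).toReal - (ℙ (A' ∩ B)).toReal
        + (ℙ (A' ∩ B')).toReal
        - ((ℙ A).toReal - (ℙ A').toReal) * ((ℙ B).toReal - (ℙ B').toReal)
      = ((ℙ (A ∩ B)).toReal - (ℙ A).toReal * (ℙ B).toReal)
        + (-((ℙ (A ∩ B')).toReal - (ℙ A).toReal * (ℙ B').toReal))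
        + (-((ℙ (A' ∩ B)).toReal - (ℙ A').toReal * (ℙ B).toReal))
        + ((ℙ (A' ∩ B')).toReal - (ℙ A').toReal * (ℙ B').toReal) := by ring
  rw [key]
  refine abs_add_four b1 ?_ ?_ b4
  · rw [abs_neg]; exact b2
  · rw [abs_neg]; exact b3


lemma clamp_cov {Ω : Type*} [MeasureSpace Ω] [IsProbabilityMeasure (ℙ : Measure Ω)]
    (X Y : Ω → ℝ) (hX : Measurable X) (hY : Measurable Y) {M α : ℝ} (hM : 0 < M)
    (hts : ∀ t s : ℝ, |(∫ ω, Ffun t (X ω) * Ffun s (Y ω) ∂ℙ)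
      - (∫ ω, Ffun t (X ω) ∂ℙ) * (∫ ω, Ffun s (Y ω) ∂ℙ)| ≤ α) :
    |(∫ ω, (max (-M) (min M (X ω))) * (max (-M) (min M (Y ω))) ∂ℙ)
      - (∫ ω, max (-M) (min M (X ω)) ∂ℙ) * (∫ ω, max (-M) (min M (Y ω)) ∂ℙ)|
      ≤ α * (M * M) := by
  set μI := volume.restrict (Set.Ioc (0:ℝ) M) with hμI
  haveI : IsFiniteMeasure μI :=
    ⟨by rw [hμI, Measure.restrict_apply_univ]; exact measure_Ioc_lt_top⟩
  set μ2 := μI.prod μI with hμ2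
  -- measurability of building blocks
  have mF1 : Measurable (fun z : Ω × ℝ => Ffun z.2 (X z.1)) :=
    measurable_Ffun.comp (measurable_snd.prodMk (hX.comp measurable_fst))
  have mF2 : Measurable (fun z : Ω × ℝ => Ffun z.2 (Y z.1)) :=
    measurable_Ffun.comp (measurable_snd.prodMk (hY.comp measurable_fst))
  have mΦ : Measurable (fun z : Ω × (ℝ × ℝ) => Ffun z.2.1 (X z.1) * Ffun z.2.2 (Y z.1)) := by
    have h1 : Measurable (fun z : Ω × (ℝ × ℝ) => Ffun z.2.1 (X z.1)) :=
      measurable_Ffun.comp ((measurable_snd.fst).prodMk (hX.comp measurable_fst))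
    have h2 : Measurable (fun z : Ω × (ℝ × ℝ) => Ffun z.2.2 (Y z.1)) :=
      measurable_Ffun.comp ((measurable_snd.snd).prodMk (hY.comp measurable_fst))
    exact h1.mul h2
  -- integrability
  have ΦInt : Integrable (fun z : Ω × (ℝ × ℝ) => Ffun z.2.1 (X z.1) * Ffun z.2.2 (Y z.1))
      (Measure.prod ℙ μ2) := by
    refine (integrable_const (1:ℝ)).mono' mΦ.aestronglyMeasurable
      (Filter.Eventually.of_forall fun z => ?_)
    rw [Real.norm_eq_abs, abs_mul]
    exact mul_le_one₀ (abs_Ffun_le_one _ _) (abs_nonneg _) (abs_Ffun_le_one _ _)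
  have Φ1Int : Integrable (fun z : Ω × ℝ => Ffun z.2 (X z.1)) (Measure.prod ℙ μI) := by
    refine (integrable_const (1:ℝ)).mono' mF1.aestronglyMeasurable
      (Filter.Eventually.of_forall fun z => ?_)
    rw [Real.norm_eq_abs]; exact abs_Ffun_le_one _ _
  have Φ2Int : Integrable (fun z : Ω × ℝ => Ffun z.2 (Y z.1)) (Measure.prod ℙ μI) := by
    refine (integrable_const (1:ℝ)).mono' mF2.aestronglyMeasurable
      (Filter.Eventually.of_forall fun z => ?_)
    rw [Real.norm_eq_abs]; exact abs_Ffun_le_one _ _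
  -- clamp representation
  have hrepX : ∀ ω, max (-M) (min M (X ω)) = ∫ t, Ffun t (X ω) ∂μI := fun ω =>
    (integral_Ffun (X ω) M hM.le).symm
  have hrepY : ∀ ω, max (-M) (min M (Y ω)) = ∫ t, Ffun t (Y ω) ∂μI := fun ω =>
    (integral_Ffun (Y ω) M hM.le).symm
  -- step 1: double integral representation of E[X_M Y_M]
  have step1 : ∫ ω, (max (-M) (min M (X ω))) * (max (-M) (min M (Y ω))) ∂ℙ
      = ∫ p, (∫ ω, Ffun p.1 (X ω) * Ffun p.2 (Y ω) ∂ℙ) ∂μ2 := by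
    have e : ∀ ω, (max (-M) (min M (X ω))) * (max (-M) (min M (Y ω)))
        = ∫ p, Ffun p.1 (X ω) * Ffun p.2 (Y ω) ∂μ2 := by
      intro ω
      rw [hrepX ω, hrepY ω, hμ2,
        integral_prod_mul (fun t => Ffun t (X ω)) (fun s => Ffun s (Y ω))]
    simp only [e]
    exact integral_integral_swap ΦInt
  -- step 2/3: swap for single factors
  have step2 : ∫ ω, max (-M) (min M (X ω)) ∂ℙ = ∫ t, (∫ ω, Ffun t (X ω) ∂ℙ) ∂μI := by
    simp only [hrepX]
    exact integral_integral_swap Φ1Int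
  have step3 : ∫ ω, max (-M) (min M (Y ω)) ∂ℙ = ∫ t, (∫ ω, Ffun t (Y ω) ∂ℙ) ∂μI := by
    simp only [hrepY]
    exact integral_integral_swap Φ2Int
  -- step 4: product of integrals as double integral
  have step4 : (∫ t, (∫ ω, Ffun t (X ω) ∂ℙ) ∂μI) * (∫ s, (∫ ω, Ffun s (Y ω) ∂ℙ) ∂μI)
      = ∫ p, (∫ ω, Ffun p.1 (X ω) ∂ℙ) * (∫ ω, Ffun p.2 (Y ω) ∂ℙ) ∂μ2 :=
    (integral_prod_mul (fun t => ∫ ω, Ffun t (X ω) ∂ℙ) (fun s => ∫ ω, Ffun s (Y ω) ∂ℙ)).symm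
  rw [step1, step2, step3, step4]
  -- integrability of the two double integrands over μ2
  have hG : Integrable (fun p : ℝ × ℝ => ∫ ω, Ffun p.1 (X ω) * Ffun p.2 (Y ω) ∂ℙ) μ2 :=
    ΦInt.integral_prod_right
  have hH : Integrable (fun p : ℝ × ℝ => (∫ ω, Ffun p.1 (X ω) ∂ℙ) * (∫ ω, Ffun p.2 (Y ω) ∂ℙ))
      μ2 := Integrable.mul_prod Φ1Int.integral_prod_right Φ2Int.integral_prod_right
  rw [← integral_sub hG hH]
  have hμ2univ : (μ2 Set.univ).toReal = M * M := by
    rw [hμ2, ← Set.univ_prod_univ, Measure.prod_prod, hμI, Measure.restrict_apply_univ,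
      Real.volume_Ioc, sub_zero, ENNReal.toReal_mul, ENNReal.toReal_ofReal hM.le]
  calc |∫ p, ((∫ ω, Ffun p.1 (X ω) * Ffun p.2 (Y ω) ∂ℙ)
        - (∫ ω, Ffun p.1 (X ω) ∂ℙ) * (∫ ω, Ffun p.2 (Y ω) ∂ℙ)) ∂μ2|
      ≤ α * (μ2 Set.univ).toReal := by
        rw [← Real.norm_eq_abs]
        exact norm_integral_le_of_norm_le_const
          (Filter.Eventually.of_forall fun p => by rw [Real.norm_eq_abs]; exact hts p.1 p.2)
    _ = α * (M * M) := by rw [hμ2univ]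



lemma add_pow_le (a b : ℝ) (ha : 0 ≤ a) (hb : 0 ≤ b) (p : ℕ) :
    (a + b) ^ p ≤ 2 ^ p * (a ^ p + b ^ p) := by
  calc (a + b) ^ p ≤ (2 * max a b) ^ p := by
        apply pow_le_pow_left₀ (by positivity)
        rcases le_total a b with h | h
        · rw [max_eq_right h]; linarith
        · rw [max_eq_left h]; linarith
    _ = 2 ^ p * (max a b) ^ p := mul_pow 2 _ p
    _ ≤ 2 ^ p * (a ^ p + b ^ p) := by
        gcongr
        rcases le_total a b with h | h
        · rw [max_eq_right h]; nlinarith [pow_nonneg ha p]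
        · rw [max_eq_left h]; nlinarith [pow_nonneg hb p]

lemma pow4_mul_le (a b : ℝ) (ha : 0 ≤ a) (hb : 0 ≤ b) : a ^ 4 * b ≤ a ^ 5 + b ^ 5 := by
  rcases le_total a b with h | h
  · calc a ^ 4 * b ≤ b ^ 4 * b := by gcongr
      _ = b ^ 5 := by ring
      _ ≤ a ^ 5 + b ^ 5 := by nlinarith [pow_nonneg ha 5]
  · calc a ^ 4 * b ≤ a ^ 4 * a := by gcongr
      _ = a ^ 5 := by ring
      _ ≤ a ^ 5 + b ^ 5 := by nlinarith [pow_nonneg hb 5]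

lemma mul_le_pow5 (a b : ℝ) (ha : 0 ≤ a) (hb : 0 ≤ b) : a * b ≤ a ^ 5 + b ^ 5 + 1 := by
  rcases le_total a 1 with h1 | h1 <;> rcases le_total b 1 with h2 | h2
  · nlinarith [pow_nonneg ha 5, pow_nonneg hb 5]
  · calc a * b ≤ 1 * b := by gcongr
      _ = b := one_mul b
      _ ≤ b ^ 5 := le_self_pow₀ h2 (by norm_num)
      _ ≤ a ^ 5 + b ^ 5 + 1 := by nlinarith [pow_nonneg ha 5]
  · calc a * b ≤ a * 1 := by gcongr
      _ = a := mul_one a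
      _ ≤ a ^ 5 := le_self_pow₀ h1 (by norm_num)
      _ ≤ a ^ 5 + b ^ 5 + 1 := by nlinarith [pow_nonneg hb 5]
  · rcases le_total a b with h | h
    · calc a * b ≤ b * b := by gcongr
        _ = b ^ 2 := (sq b).symm
        _ ≤ b ^ 5 := pow_le_pow_right₀ h2 (by norm_num)
        _ ≤ a ^ 5 + b ^ 5 + 1 := by nlinarith [pow_nonneg ha 5]
    · calc a * b ≤ a * a := by gcongr
        _ = a ^ 2 := (sq a).symm
        _ ≤ a ^ 5 := pow_le_pow_right₀ h1 (by norm_num)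
        _ ≤ a ^ 5 + b ^ 5 + 1 := by nlinarith [pow_nonneg hb 5]

lemma pow_le_pow5_add_one (a : ℝ) (ha : 0 ≤ a) : a ^ 4 ≤ a ^ 5 + 1 := by
  have := pow4_mul_le a 1 ha zero_le_one
  simpa using this

lemma abs_clamp_le_abs (x M : ℝ) (hM : 0 ≤ M) : |max (-M) (min M x)| ≤ |x| := by
  rcases le_total 0 x with hx | hx
  · have h1 : max (-M) (min M x) = min M x := max_eq_right (le_trans (by linarith) (le_min hM hx))
    rw [h1, abs_of_nonneg (le_min hM hx), abs_of_nonneg hx]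
    exact min_le_right M x
  · have h2 : min M x = x := min_eq_right (le_trans hx hM)
    rw [h2, abs_of_nonpos hx, abs_of_nonpos (le_trans (max_le (by linarith) hx) (by linarith))]
    simp only [neg_le_neg_iff]
    exact le_max_right _ _
  
lemma abs_sub_clamp_le (x M : ℝ) (hM : 0 < M) :
    |x - max (-M) (min M x)| ≤ |x| ^ 4 / M ^ 3 := by
  rw [le_div_iff₀ (by positivity : (0:ℝ) < M ^ 3)]
  rcases le_or_gt |x| M with h | h
  · have hx := abs_le.mp h
    have h1 : min M x = x := min_eq_right hx.2
    have h2 : max (-M) x = x := max_eq_right hx.1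
    rw [h1, h2, sub_self, abs_zero, zero_mul]
    positivity
  · have h1 : |x - max (-M) (min M x)| ≤ |x| := by
      rcases lt_abs.mp h with hx | hx
      · have e1 : min M x = M := min_eq_left hx.le
        have e2 : max (-M) M = M := max_eq_right (by linarith)
        rw [e1, e2, abs_of_nonneg (by linarith), abs_of_nonneg (by linarith)]
        linarith
      · have e1 : min M x = x := min_eq_right (by linarith)
        have e2 : max (-M) x = -M := max_eq_left (by linarith)
        rw [e1, e2, sub_neg_eq_add, abs_of_nonpos (by linarith), abs_of_nonpos (by linarith)]
        linarith
    calc |x - max (-M) (min M x)| * M ^ 3 ≤ |x| * |x| ^ 3 := by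
          exact mul_le_mul h1 (pow_le_pow_left₀ hM.le h.le 3) (by positivity) (abs_nonneg x)
      _ = |x| ^ 4 := by ring



section Transfer
variable {Ω : Type*} [MeasureSpace Ω] [IsProbabilityMeasure (ℙ : Measure Ω)]
  (U : ℕ → Ω → ℝ)

lemma map_eq_map_zero (hMeas : ∀ i, Measurable (U i))
    (hStat : ∀ k n : ℕ,
      Measure.map (fun ω => fun i : Fin (n + 1) => U (k + i) ω) ℙ
        = Measure.map (fun ω => fun i : Fin (n + 1) => U i ω) ℙ) (a : ℕ) :
    Measure.map (U a) ℙ = Measure.map (U 0) ℙ := by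
  have h := hStat a 0
  have hm1 : Measurable (fun ω => fun i : Fin 1 => U (a + ↑i) ω) :=
    measurable_pi_lambda _ (fun i => hMeas _)
  have hm2 : Measurable (fun ω => fun i : Fin 1 => U (↑i) ω) :=
    measurable_pi_lambda _ (fun i => hMeas _)
  calc Measure.map (U a) ℙ
      = Measure.map ((fun f : Fin 1 → ℝ => f 0) ∘ (fun ω => fun i : Fin 1 => U (a + ↑i) ω)) ℙ := by
        congr 1
    _ = Measure.map (fun f : Fin 1 → ℝ => f 0)
          (Measure.map (fun ω => fun i : Fin 1 => U (a + ↑i) ω) ℙ) :=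
        (Measure.map_map (measurable_pi_apply (0 : Fin 1)) hm1).symm
    _ = Measure.map (fun f : Fin 1 → ℝ => f 0)
          (Measure.map (fun ω => fun i : Fin 1 => U (↑i) ω) ℙ) := by rw [h]
    _ = Measure.map ((fun f : Fin 1 → ℝ => f 0) ∘ (fun ω => fun i : Fin 1 => U (↑i) ω)) ℙ :=
        Measure.map_map (measurable_pi_apply (0 : Fin 1)) hm2
    _ = Measure.map (U 0) ℙ := by congr 1

lemma integrable_abs_pow (hMeas : ∀ i, Measurable (U i))
    (hmap : ∀ a, Measure.map (U a) ℙ = Measure.map (U 0) ℙ)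
    (hMom : ∀ p : ℕ, 1 ≤ p → Integrable (fun ω => |U 0 ω| ^ p) ℙ)
    (a p : ℕ) (hp : 1 ≤ p) : Integrable (fun ω => |U a ω| ^ p) ℙ := by
  have hg : Measurable (fun x : ℝ => |x| ^ p) := measurable_abs.pow_const p
  have h0 : Integrable (fun x : ℝ => |x| ^ p) (Measure.map (U 0) ℙ) := by
    rw [integrable_map_measure hg.aestronglyMeasurable (hMeas 0).aemeasurable]
    exact hMom p hp
  have h1 : Integrable (fun x : ℝ => |x| ^ p) (Measure.map (U a) ℙ) := by
    rw [hmap a]; exact h0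
  exact (integrable_map_measure hg.aestronglyMeasurable (hMeas a).aemeasurable).mp h1

lemma integral_abs_pow_eq (hMeas : ∀ i, Measurable (U i))
    (hmap : ∀ a, Measure.map (U a) ℙ = Measure.map (U 0) ℙ) (a p : ℕ) :
    ∫ ω, |U a ω| ^ p ∂ℙ = ∫ ω, |U 0 ω| ^ p ∂ℙ := by
  have hg : Measurable (fun x : ℝ => |x| ^ p) := measurable_abs.pow_const p
  calc ∫ ω, |U a ω| ^ p ∂ℙ = ∫ x, |x| ^ p ∂(Measure.map (U a) ℙ) :=
        (integral_map (hMeas a).aemeasurable hg.aestronglyMeasurable).symm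
    _ = ∫ x, |x| ^ p ∂(Measure.map (U 0) ℙ) := by rw [hmap a]
    _ = ∫ ω, |U 0 ω| ^ p ∂ℙ := integral_map (hMeas 0).aemeasurable hg.aestronglyMeasurable

lemma integrable_U (hMeas : ∀ i, Measurable (U i))
    (hmap : ∀ a, Measure.map (U a) ℙ = Measure.map (U 0) ℙ)
    (hMom : ∀ p : ℕ, 1 ≤ p → Integrable (fun ω => |U 0 ω| ^ p) ℙ) (a : ℕ) :
    Integrable (U a) ℙ := by
  have h1 : Integrable (fun ω => |U a ω| ^ 1) ℙ :=
    integrable_abs_pow U hMeas hmap hMom a 1 le_rfl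
  simp only [pow_one] at h1
  refine h1.mono' (hMeas a).aestronglyMeasurable (Filter.Eventually.of_forall fun ω => ?_)
  rw [Real.norm_eq_abs]

lemma integral_U_eq (hMeas : ∀ i, Measurable (U i))
    (hmap : ∀ a, Measure.map (U a) ℙ = Measure.map (U 0) ℙ) (a : ℕ) :
    ∫ ω, U a ω ∂ℙ = ∫ ω, U 0 ω ∂ℙ := by
  calc ∫ ω, U a ω ∂ℙ = ∫ x, x ∂(Measure.map (U a) ℙ) :=
        (integral_map (hMeas a).aemeasurable aestronglyMeasurable_id).symm
    _ = ∫ x, x ∂(Measure.map (U 0) ℙ) := by rw [hmap a]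
    _ = ∫ ω, U 0 ω ∂ℙ := integral_map (hMeas 0).aemeasurable aestronglyMeasurable_id

end Transfer

section Sigma
variable {Ω : Type*} [MeasureSpace Ω] (U : ℕ → Ω → ℝ)

lemma pastSigma_le (hMeas : ∀ i, Measurable (U i)) (k : ℕ) :
    pastSigma U k ≤ MeasureSpace.toMeasurableSpace :=
  iSup_le fun i => measurable_iff_comap_le.mp (hMeas i)

lemma futureSigma_le (hMeas : ∀ i, Measurable (U i)) (m : ℕ) :
    futureSigma U m ≤ MeasureSpace.toMeasurableSpace :=
  iSup_le fun i => measurable_iff_comap_le.mp (hMeas (m + i))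

lemma measurable_pastSigma (k m : ℕ) (hm : m ≤ k) : Measurable[pastSigma U k] (U m) := by
  apply measurable_iff_comap_le.mpr
  have : MeasurableSpace.comap (U m) inferInstance
      = MeasurableSpace.comap (U ↑(⟨m, by omega⟩ : Fin (k + 1))) inferInstance := rfl
  rw [this]
  exact le_iSup (fun i : Fin (k + 1) => MeasurableSpace.comap (U i) inferInstance) _

lemma measurable_futureSigma (m i : ℕ) : Measurable[futureSigma U m] (U (m + i)) := by
  apply measurable_iff_comap_le.mpr
  exact le_iSup (fun i : ℕ => MeasurableSpace.comap (U (m + i)) inferInstance) i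

end Sigma

lemma le_pow5_add_one (a : ℝ) (ha : 0 ≤ a) : a ≤ a ^ 5 + 1 := by
  rcases le_total a 1 with h | h
  · nlinarith [pow_nonneg ha 5]
  · nlinarith [pow_le_pow_right₀ h (by norm_num : 1 ≤ 5)]

noncomputable def gbound (C v K : ℝ) (h : ℕ) : ℝ :=
  4 * C * (h : ℝ) ^ (1 - v) + (K ^ 2 + 2 * K) * (h : ℝ) ^ (-(3/2) : ℝ)

lemma gbound_nonneg {C v K : ℝ} (hC : 0 ≤ C) (hK : 0 ≤ K) (h : ℕ) : 0 ≤ gbound C v K h := by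
  unfold gbound
  have h1 : (0:ℝ) ≤ (h : ℝ) ^ (1 - v) := Real.rpow_nonneg (Nat.cast_nonneg h) _
  have h2 : (0:ℝ) ≤ (h : ℝ) ^ (-(3/2) : ℝ) := Real.rpow_nonneg (Nat.cast_nonneg h) _
  positivity

set_option maxHeartbeats 1000000 in
lemma pair_bound {Ω : Type*} [MeasureSpace Ω] [IsProbabilityMeasure (ℙ : Measure Ω)]
    (U : ℕ → Ω → ℝ)
    (hMeas : ∀ i, Measurable (U i))
    (hStat : ∀ k n : ℕ,
      Measure.map (fun ω => fun i : Fin (n + 1) => U (k + i) ω) ℙ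
        = Measure.map (fun ω => fun i : Fin (n + 1) => U i ω) ℙ)
    (hMom : ∀ p : ℕ, 1 ≤ p → Integrable (fun ω => |U 0 ω| ^ p) ℙ)
    (C v : ℝ) (hC : 0 < C)
    (hMix : ∀ k h : ℕ, 1 ≤ h → ∀ A B : Set Ω,
      MeasurableSet[pastSigma U k] A → MeasurableSet[futureSigma U (k + h)] B →
      |(ℙ (A ∩ B)).toReal - (ℙ A).toReal * (ℙ B).toReal| ≤ C * (h : ℝ) ^ (-v))
    (j i i' : ℕ) (hij : i + j < i') :
    |∫ ω, (U (i + j) ω - U i ω) * (U (i' + j) ω - U i' ω) ∂ℙ|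
      ≤ gbound C v (128 * (∫ ω, |U 0 ω| ^ 5 ∂ℙ) + 1) (i' - (i + j)) := by
  have hmap := map_eq_map_zero U hMeas hStat
  set X : Ω → ℝ := fun ω => U (i + j) ω - U i ω with hXdef
  set Y : Ω → ℝ := fun ω => U (i' + j) ω - U i' ω with hYdef
  set h : ℕ := i' - (i + j) with hhdef
  have hh1 : 1 ≤ h := by omega
  have hhc : (1:ℝ) ≤ (h : ℝ) := by exact_mod_cast hh1
  have hhc0 : (0:ℝ) < (h : ℝ) := by linarith
  set M : ℝ := Real.sqrt h with hMdef
  have hM1 : 1 ≤ M := by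
    rw [hMdef, show (1:ℝ) = Real.sqrt 1 from (Real.sqrt_one).symm]
    exact Real.sqrt_le_sqrt hhc
  have hM0 : 0 < M := lt_of_lt_of_le one_pos hM1
  have hMM : M * M = (h : ℝ) := Real.mul_self_sqrt hhc0.le
  have hM3 : M ^ 3 = (h : ℝ) ^ ((3:ℝ)/2) := by
    rw [hMdef, Real.sqrt_eq_rpow, ← Real.rpow_natCast ((h:ℝ) ^ ((1:ℝ)/2)) 3,
      ← Real.rpow_mul hhc0.le]
    norm_num
  set K5 : ℝ := ∫ ω, |U 0 ω| ^ 5 ∂ℙ with hK5def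
  have hK5 : 0 ≤ K5 := integral_nonneg (fun ω => by positivity)
  set K : ℝ := 128 * K5 + 1 with hKdef
  have hK1 : 1 ≤ K := by rw [hKdef]; linarith
  have hK0 : 0 ≤ K := by linarith
  have hXm : Measurable X := (hMeas _).sub (hMeas _)
  have hYm : Measurable Y := (hMeas _).sub (hMeas _)
  -- the mixing bound on the Ffun products
  have hts : ∀ t s : ℝ, |(∫ ω, Ffun t (X ω) * Ffun s (Y ω) ∂ℙ)
      - (∫ ω, Ffun t (X ω) ∂ℙ) * (∫ ω, Ffun s (Y ω) ∂ℙ)| ≤ 4 * (C * (h : ℝ) ^ (-v)) := by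
    have hXpast : Measurable[pastSigma U (i + j)] X :=
      Measurable.sub (measurable_pastSigma U (i + j) (i + j) le_rfl)
        (measurable_pastSigma U (i + j) i (by omega))
    have hYfut : Measurable[futureSigma U i'] Y := by
      have h1 := measurable_futureSigma U i' j
      have h2 := measurable_futureSigma U i' 0
      rw [Nat.add_zero] at h2
      exact h1.sub h2
    have hsets : ∀ A B : Set Ω, MeasurableSet[pastSigma U (i + j)] A →
        MeasurableSet[futureSigma U i'] B →
        |(ℙ (A ∩ B)).toReal - (ℙ A).toReal * (ℙ B).toReal| ≤ C * (h : ℝ) ^ (-v) := by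
      intro A B hA hB
      have hEq : (i + j) + h = i' := by omega
      exact hMix (i + j) h hh1 A B hA (by rw [hEq]; exact hB)
    exact Ffun_product_bound (pastSigma_le U hMeas (i + j)) (futureSigma_le U hMeas i')
      hXpast hYfut hsets
  have hcov := clamp_cov X Y hXm hYm hM0 hts
  -- the dominating function
  set W : Ω → ℝ := fun ω => |X ω| ^ 5 + |Y ω| ^ 5 + 1 with hWdef
  have habsX : ∀ ω, |X ω| ≤ |U (i + j) ω| + |U i ω| := fun ω => abs_sub _ _
  have habsY : ∀ ω, |Y ω| ≤ |U (i' + j) ω| + |U i' ω| := fun ω => abs_sub _ _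
  have hX5int : Integrable (fun ω => |X ω| ^ 5) ℙ := by
    refine Integrable.mono' (((integrable_abs_pow U hMeas hmap hMom (i + j) 5 (by norm_num)).add
        (integrable_abs_pow U hMeas hmap hMom i 5 (by norm_num))).const_mul (2 ^ 5))
      ((hXm.abs.pow_const 5).aestronglyMeasurable) (Filter.Eventually.of_forall fun ω => ?_)
    rw [Real.norm_eq_abs, abs_of_nonneg (by positivity)]
    calc |X ω| ^ 5 ≤ (|U (i + j) ω| + |U i ω|) ^ 5 :=
          pow_le_pow_left₀ (abs_nonneg _) (habsX ω) 5
      _ ≤ 2 ^ 5 * (|U (i + j) ω| ^ 5 + |U i ω| ^ 5) :=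
          add_pow_le _ _ (abs_nonneg _) (abs_nonneg _) 5
  have hY5int : Integrable (fun ω => |Y ω| ^ 5) ℙ := by
    refine Integrable.mono' (((integrable_abs_pow U hMeas hmap hMom (i' + j) 5 (by norm_num)).add
        (integrable_abs_pow U hMeas hmap hMom i' 5 (by norm_num))).const_mul (2 ^ 5))
      ((hYm.abs.pow_const 5).aestronglyMeasurable) (Filter.Eventually.of_forall fun ω => ?_)
    rw [Real.norm_eq_abs, abs_of_nonneg (by positivity)]
    calc |Y ω| ^ 5 ≤ (|U (i' + j) ω| + |U i' ω|) ^ 5 :=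
          pow_le_pow_left₀ (abs_nonneg _) (habsY ω) 5
      _ ≤ 2 ^ 5 * (|U (i' + j) ω| ^ 5 + |U i' ω| ^ 5) :=
          add_pow_le _ _ (abs_nonneg _) (abs_nonneg _) 5
  have hX5b : ∫ ω, |X ω| ^ 5 ∂ℙ ≤ 64 * K5 := by
    calc ∫ ω, |X ω| ^ 5 ∂ℙ
        ≤ ∫ ω, 2 ^ 5 * (|U (i + j) ω| ^ 5 + |U i ω| ^ 5) ∂ℙ := by
          refine integral_mono hX5int (((integrable_abs_pow U hMeas hmap hMom (i + j) 5
            (by norm_num)).add (integrable_abs_pow U hMeas hmap hMom i 5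
            (by norm_num))).const_mul (2 ^ 5)) fun ω => ?_
          calc |X ω| ^ 5 ≤ (|U (i + j) ω| + |U i ω|) ^ 5 :=
                pow_le_pow_left₀ (abs_nonneg _) (habsX ω) 5
            _ ≤ 2 ^ 5 * (|U (i + j) ω| ^ 5 + |U i ω| ^ 5) :=
                add_pow_le _ _ (abs_nonneg _) (abs_nonneg _) 5
      _ = 2 ^ 5 * ((∫ ω, |U (i + j) ω| ^ 5 ∂ℙ) + ∫ ω, |U i ω| ^ 5 ∂ℙ) := by
          rw [integral_const_mul, integral_add (integrable_abs_pow U hMeas hmap hMom (i + j) 5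
            (by norm_num)) (integrable_abs_pow U hMeas hmap hMom i 5 (by norm_num))]
      _ = 64 * K5 := by
          rw [integral_abs_pow_eq U hMeas hmap (i + j) 5, integral_abs_pow_eq U hMeas hmap i 5,
            hK5def]
          ring
  have hY5b : ∫ ω, |Y ω| ^ 5 ∂ℙ ≤ 64 * K5 := by
    calc ∫ ω, |Y ω| ^ 5 ∂ℙ
        ≤ ∫ ω, 2 ^ 5 * (|U (i' + j) ω| ^ 5 + |U i' ω| ^ 5) ∂ℙ := by
          refine integral_mono hY5int (((integrable_abs_pow U hMeas hmap hMom (i' + j) 5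
            (by norm_num)).add (integrable_abs_pow U hMeas hmap hMom i' 5
            (by norm_num))).const_mul (2 ^ 5)) fun ω => ?_
          calc |Y ω| ^ 5 ≤ (|U (i' + j) ω| + |U i' ω|) ^ 5 :=
                pow_le_pow_left₀ (abs_nonneg _) (habsY ω) 5
            _ ≤ 2 ^ 5 * (|U (i' + j) ω| ^ 5 + |U i' ω| ^ 5) :=
                add_pow_le _ _ (abs_nonneg _) (abs_nonneg _) 5
      _ = 2 ^ 5 * ((∫ ω, |U (i' + j) ω| ^ 5 ∂ℙ) + ∫ ω, |U i' ω| ^ 5 ∂ℙ) := by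
          rw [integral_const_mul, integral_add (integrable_abs_pow U hMeas hmap hMom (i' + j) 5
            (by norm_num)) (integrable_abs_pow U hMeas hmap hMom i' 5 (by norm_num))]
      _ = 64 * K5 := by
          rw [integral_abs_pow_eq U hMeas hmap (i' + j) 5, integral_abs_pow_eq U hMeas hmap i' 5,
            hK5def]
          ring
  have hWint : Integrable W ℙ := (hX5int.add hY5int).add (integrable_const 1)
  have hWapp : ∀ ω, W ω = |X ω| ^ 5 + |Y ω| ^ 5 + 1 := fun _ => rfl
  have hXY5int : Integrable (fun ω => |X ω| ^ 5 + |Y ω| ^ 5) ℙ := hX5int.add hY5int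
  have hWb : ∫ ω, W ω ∂ℙ ≤ K := by
    have e : ∫ ω, W ω ∂ℙ = (∫ ω, |X ω| ^ 5 ∂ℙ) + (∫ ω, |Y ω| ^ 5 ∂ℙ) + 1 := by
      calc ∫ ω, W ω ∂ℙ = ∫ ω, ((|X ω| ^ 5 + |Y ω| ^ 5) + 1) ∂ℙ := by simp only [hWapp]
        _ = (∫ ω, (|X ω| ^ 5 + |Y ω| ^ 5) ∂ℙ) + ∫ _ω, (1:ℝ) ∂ℙ :=
            integral_add hXY5int (integrable_const 1)
        _ = (∫ ω, |X ω| ^ 5 ∂ℙ) + (∫ ω, |Y ω| ^ 5 ∂ℙ) + 1 := by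
            rw [integral_add hX5int hY5int, integral_const, probReal_univ,
              smul_eq_mul, one_mul]
    rw [e, hKdef]
    linarith
  have hIW : ∀ f : Ω → ℝ, Measurable f → (∀ ω, |f ω| ≤ W ω) → Integrable f ℙ := fun f hf hb =>
    hWint.mono' hf.aestronglyMeasurable
      (Filter.Eventually.of_forall fun ω => by rw [Real.norm_eq_abs]; exact hb ω)
  set XM : Ω → ℝ := fun ω => max (-M) (min M (X ω)) with hXMdef
  set YM : Ω → ℝ := fun ω => max (-M) (min M (Y ω)) with hYMdef
  have hXMm : Measurable XM := measurable_const.max (measurable_const.min hXm)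
  have hYMm : Measurable YM := measurable_const.max (measurable_const.min hYm)
  have pXM : ∀ ω, |XM ω| ≤ |X ω| := fun ω => abs_clamp_le_abs (X ω) M hM0.le
  have pYM : ∀ ω, |YM ω| ≤ |Y ω| := fun ω => abs_clamp_le_abs (Y ω) M hM0.le
  have pXd : ∀ ω, |X ω - XM ω| ≤ |X ω| ^ 4 / M ^ 3 := fun ω => abs_sub_clamp_le (X ω) M hM0
  have pYd : ∀ ω, |Y ω - YM ω| ≤ |Y ω| ^ 4 / M ^ 3 := fun ω => abs_sub_clamp_le (Y ω) M hM0
  have pXYW : ∀ ω, |X ω| * |Y ω| ≤ W ω := fun ω =>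
    mul_le_pow5 _ _ (abs_nonneg _) (abs_nonneg _)
  have IXY : Integrable (fun ω => X ω * Y ω) ℙ :=
    hIW _ (hXm.mul hYm) fun ω => by rw [abs_mul]; exact pXYW ω
  have IXMYM : Integrable (fun ω => XM ω * YM ω) ℙ :=
    hIW _ (hXMm.mul hYMm) fun ω => by
      rw [abs_mul]
      exact le_trans (mul_le_mul (pXM ω) (pYM ω) (abs_nonneg _) (abs_nonneg _)) (pXYW ω)
  have IX : Integrable X ℙ :=
    (integrable_U U hMeas hmap hMom (i + j)).sub (integrable_U U hMeas hmap hMom i)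
  have IY : Integrable Y ℙ :=
    (integrable_U U hMeas hmap hMom (i' + j)).sub (integrable_U U hMeas hmap hMom i')
  have IXM : Integrable XM ℙ := hIW _ hXMm fun ω => by
    refine le_trans (pXM ω) (le_trans (le_pow5_add_one _ (abs_nonneg _)) ?_)
    rw [hWapp ω]
    have : (0:ℝ) ≤ |Y ω| ^ 5 := by positivity
    linarith
  have IYM : Integrable YM ℙ := hIW _ hYMm fun ω => by
    refine le_trans (pYM ω) (le_trans (le_pow5_add_one _ (abs_nonneg _)) ?_)
    rw [hWapp ω]
    have : (0:ℝ) ≤ |X ω| ^ 5 := by positivity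
    linarith
  have IX4 : Integrable (fun ω => |X ω| ^ 4) ℙ := hIW _ (hXm.abs.pow_const 4) fun ω => by
    rw [abs_of_nonneg (by positivity)]
    refine le_trans (pow_le_pow5_add_one _ (abs_nonneg _)) ?_
    rw [hWapp ω]
    have : (0:ℝ) ≤ |Y ω| ^ 5 := by positivity
    linarith
  have IY4 : Integrable (fun ω => |Y ω| ^ 4) ℙ := hIW _ (hYm.abs.pow_const 4) fun ω => by
    rw [abs_of_nonneg (by positivity)]
    refine le_trans (pow_le_pow5_add_one _ (abs_nonneg _)) ?_
    rw [hWapp ω]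
    have : (0:ℝ) ≤ |X ω| ^ 5 := by positivity
    linarith
  have hIX4W : ∫ ω, |X ω| ^ 4 ∂ℙ ≤ K := by
    refine le_trans (integral_mono IX4 hWint fun ω => ?_) hWb
    refine le_trans (pow_le_pow5_add_one _ (abs_nonneg _)) ?_
    rw [hWapp ω]
    have : (0:ℝ) ≤ |Y ω| ^ 5 := by positivity
    linarith
  have hIY4W : ∫ ω, |Y ω| ^ 4 ∂ℙ ≤ K := by
    refine le_trans (integral_mono IY4 hWint fun ω => ?_) hWb
    refine le_trans (pow_le_pow5_add_one _ (abs_nonneg _)) ?_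
    rw [hWapp ω]
    have : (0:ℝ) ≤ |X ω| ^ 5 := by positivity
    linarith
  -- E X = 0, E Y = 0
  have hEX0 : ∫ ω, X ω ∂ℙ = 0 := by
    rw [hXdef]
    rw [integral_sub (integrable_U U hMeas hmap hMom (i + j)) (integrable_U U hMeas hmap hMom i),
      integral_U_eq U hMeas hmap (i + j), integral_U_eq U hMeas hmap i, sub_self]
  have hEY0 : ∫ ω, Y ω ∂ℙ = 0 := by
    rw [hYdef]
    rw [integral_sub (integrable_U U hMeas hmap hMom (i' + j))
      (integrable_U U hMeas hmap hMom i'),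
      integral_U_eq U hMeas hmap (i' + j), integral_U_eq U hMeas hmap i', sub_self]
  -- bound on |E XM| and |E YM|
  have habsint : ∀ f : Ω → ℝ, |∫ ω, f ω ∂ℙ| ≤ ∫ ω, |f ω| ∂ℙ := fun f => by
    simpa [Real.norm_eq_abs] using norm_integral_le_integral_norm (μ := ℙ) f
  have hEXM : |∫ ω, XM ω ∂ℙ| ≤ K / M ^ 3 := by
    have e : ∫ ω, XM ω ∂ℙ = ∫ ω, (XM ω - X ω) ∂ℙ := by
      rw [integral_sub IXM IX, hEX0, sub_zero]
    rw [e]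
    calc |∫ ω, (XM ω - X ω) ∂ℙ| ≤ ∫ ω, |XM ω - X ω| ∂ℙ := habsint _
      _ ≤ ∫ ω, |X ω| ^ 4 / M ^ 3 ∂ℙ := by
          refine integral_mono (IXM.sub IX).abs (IX4.div_const _) fun ω => ?_
          rw [abs_sub_comm]
          exact pXd ω
      _ = (∫ ω, |X ω| ^ 4 ∂ℙ) / M ^ 3 := integral_div _ _
      _ ≤ K / M ^ 3 := by
          apply div_le_div_of_nonneg_right hIX4W (by positivity)
  have hEYM : |∫ ω, YM ω ∂ℙ| ≤ K / M ^ 3 := by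
    have e : ∫ ω, YM ω ∂ℙ = ∫ ω, (YM ω - Y ω) ∂ℙ := by
      rw [integral_sub IYM IY, hEY0, sub_zero]
    rw [e]
    calc |∫ ω, (YM ω - Y ω) ∂ℙ| ≤ ∫ ω, |YM ω - Y ω| ∂ℙ := habsint _
      _ ≤ ∫ ω, |Y ω| ^ 4 / M ^ 3 ∂ℙ := by
          refine integral_mono (IYM.sub IY).abs (IY4.div_const _) fun ω => ?_
          rw [abs_sub_comm]
          exact pYd ω
      _ = (∫ ω, |Y ω| ^ 4 ∂ℙ) / M ^ 3 := integral_div _ _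
      _ ≤ K / M ^ 3 := by
          apply div_le_div_of_nonneg_right hIY4W (by positivity)
  -- truncation error
  have hT1 : |(∫ ω, X ω * Y ω ∂ℙ) - ∫ ω, XM ω * YM ω ∂ℙ| ≤ 2 * K / M ^ 3 := by
    rw [← integral_sub IXY IXMYM]
    calc |∫ ω, (X ω * Y ω - XM ω * YM ω) ∂ℙ|
        ≤ ∫ ω, |X ω * Y ω - XM ω * YM ω| ∂ℙ := habsint _
      _ ≤ ∫ ω, 2 * W ω / M ^ 3 ∂ℙ := by
          refine integral_mono (IXY.sub IXMYM).abs ((hWint.const_mul 2).div_const _)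
            fun ω => ?_
          have e : X ω * Y ω - XM ω * YM ω = (X ω - XM ω) * Y ω + XM ω * (Y ω - YM ω) := by
            ring
          rw [e]
          calc |(X ω - XM ω) * Y ω + XM ω * (Y ω - YM ω)|
              ≤ |(X ω - XM ω) * Y ω| + |XM ω * (Y ω - YM ω)| := abs_add_le _ _
            _ = |X ω - XM ω| * |Y ω| + |XM ω| * |Y ω - YM ω| := by rw [abs_mul, abs_mul]
            _ ≤ (|X ω| ^ 4 / M ^ 3) * |Y ω| + |X ω| * (|Y ω| ^ 4 / M ^ 3) := by
                apply add_le_add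
                · exact mul_le_mul_of_nonneg_right (pXd ω) (abs_nonneg _)
                · exact mul_le_mul (pXM ω) (pYd ω) (abs_nonneg _) (abs_nonneg _)
            _ = (|X ω| ^ 4 * |Y ω| + |X ω| * |Y ω| ^ 4) / M ^ 3 := by ring
            _ ≤ 2 * W ω / M ^ 3 := by
                apply div_le_div_of_nonneg_right _ (by positivity)
                have b1 : |X ω| ^ 4 * |Y ω| ≤ |X ω| ^ 5 + |Y ω| ^ 5 :=
                  pow4_mul_le _ _ (abs_nonneg _) (abs_nonneg _)
                have b2 : |X ω| * |Y ω| ^ 4 ≤ |Y ω| ^ 5 + |X ω| ^ 5 := by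
                  have := pow4_mul_le (|Y ω|) (|X ω|) (abs_nonneg _) (abs_nonneg _)
                  linarith [mul_comm (|X ω|) (|Y ω| ^ 4)]
                rw [hWapp ω]
                linarith
      _ = 2 * (∫ ω, W ω ∂ℙ) / M ^ 3 := by rw [integral_div, integral_const_mul]
      _ ≤ 2 * K / M ^ 3 := by
          apply div_le_div_of_nonneg_right _ (by positivity)
          linarith
  -- assemble
  have decomp : ∫ ω, X ω * Y ω ∂ℙ
      = ((∫ ω, X ω * Y ω ∂ℙ) - ∫ ω, XM ω * YM ω ∂ℙ)
        + ((∫ ω, XM ω * YM ω ∂ℙ) - (∫ ω, XM ω ∂ℙ) * (∫ ω, YM ω ∂ℙ))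
        + (∫ ω, XM ω ∂ℙ) * (∫ ω, YM ω ∂ℙ) := by ring
  have habs : |∫ ω, X ω * Y ω ∂ℙ|
      ≤ 2 * K / M ^ 3 + 4 * (C * (h : ℝ) ^ (-v)) * (M * M) + (K / M ^ 3) * (K / M ^ 3) := by
    rw [decomp]
    calc |((∫ ω, X ω * Y ω ∂ℙ) - ∫ ω, XM ω * YM ω ∂ℙ)
            + ((∫ ω, XM ω * YM ω ∂ℙ) - (∫ ω, XM ω ∂ℙ) * (∫ ω, YM ω ∂ℙ))
            + (∫ ω, XM ω ∂ℙ) * (∫ ω, YM ω ∂ℙ)|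
        ≤ |((∫ ω, X ω * Y ω ∂ℙ) - ∫ ω, XM ω * YM ω ∂ℙ)
            + ((∫ ω, XM ω * YM ω ∂ℙ) - (∫ ω, XM ω ∂ℙ) * (∫ ω, YM ω ∂ℙ))|
          + |(∫ ω, XM ω ∂ℙ) * (∫ ω, YM ω ∂ℙ)| := abs_add_le _ _
      _ ≤ |(∫ ω, X ω * Y ω ∂ℙ) - ∫ ω, XM ω * YM ω ∂ℙ|
          + |(∫ ω, XM ω * YM ω ∂ℙ) - (∫ ω, XM ω ∂ℙ) * (∫ ω, YM ω ∂ℙ)|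
          + |(∫ ω, XM ω ∂ℙ) * (∫ ω, YM ω ∂ℙ)| := by
            gcongr
            exact abs_add_le _ _
      _ ≤ 2 * K / M ^ 3 + 4 * (C * (h : ℝ) ^ (-v)) * (M * M) + (K / M ^ 3) * (K / M ^ 3) := by
            gcongr
            rw [abs_mul]
            exact mul_le_mul hEXM hEYM (abs_nonneg _) (le_trans (abs_nonneg _) hEXM)
  refine le_trans habs ?_
  -- convert to the gbound form
  have hpow : (h : ℝ) ^ (1 - v) = (h : ℝ) ^ (-v) * (h : ℝ) := by
    rw [show (1:ℝ) - v = -v + 1 by ring, Real.rpow_add hhc0, Real.rpow_one]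
  have e1 : 4 * (C * (h : ℝ) ^ (-v)) * (M * M) = 4 * C * (h : ℝ) ^ (1 - v) := by
    rw [hMM, hpow]
    ring
  have hM3inv : 1 / M ^ 3 = (h : ℝ) ^ (-(3/2) : ℝ) := by
    rw [hM3, Real.rpow_neg hhc0.le, one_div]
  have e2 : 2 * K / M ^ 3 + (K / M ^ 3) * (K / M ^ 3)
      ≤ (K ^ 2 + 2 * K) * (h : ℝ) ^ (-(3/2) : ℝ) := by
    have hM3one : 1 ≤ M ^ 3 := one_le_pow₀ hM1
    have hKM : (K / M ^ 3) * (K / M ^ 3) ≤ K ^ 2 / M ^ 3 := by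
      rw [div_mul_div_comm, ← sq K, ← sq (M ^ 3)]
      apply div_le_div_of_nonneg_left (by positivity) (by positivity)
      nlinarith
    have : 2 * K / M ^ 3 + (K / M ^ 3) * (K / M ^ 3) ≤ (K ^ 2 + 2 * K) / M ^ 3 :=
      le_trans (add_le_add le_rfl hKM) (le_of_eq (by ring))
    refine le_trans this ?_
    rw [div_eq_mul_one_div, hM3inv]
  have hgb : gbound C v K h
      = 4 * C * (h : ℝ) ^ (1 - v) + (K ^ 2 + 2 * K) * (h : ℝ) ^ (-(3/2) : ℝ) := rfl
  rw [e1] at habs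
  rw [hgb]
  linarith [habs, e2]

theorem cross_terms_sum_bound'
    {Ω : Type*} [MeasureSpace Ω] [IsProbabilityMeasure (ℙ : Measure Ω)]
    (U : ℕ → Ω → ℝ)
    (hMeas : ∀ i, Measurable (U i))
    (hStat : ∀ k n : ℕ,
      Measure.map (fun ω => fun i : Fin (n + 1) => U (k + i) ω) ℙ
        = Measure.map (fun ω => fun i : Fin (n + 1) => U i ω) ℙ)
    (hSymm : Measure.map (U 0) ℙ = Measure.map (fun ω => -U 0 ω) ℙ)
    (hMom : ∀ p : ℕ, 1 ≤ p → Integrable (fun ω => |U 0 ω| ^ p) ℙ)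
    (C v : ℝ) (hC : 0 < C)
    (hMix : ∀ k h : ℕ, 1 ≤ h → ∀ A B : Set Ω,
      MeasurableSet[pastSigma U k] A → MeasurableSet[futureSigma U (k + h)] B →
      |(ℙ (A ∩ B)).toReal - (ℙ A).toReal * (ℙ B).toReal| ≤ C * (h : ℝ) ^ (-v))
    (hv : 2 < v) :
    ∃ C' > (0 : ℝ), ∀ n j : ℕ, 1 ≤ n → 1 ≤ j → j ≤ n →
      ∑ i ∈ Finset.range (n - j + 1), ∑ i' ∈ Finset.range (n - j + 1),
        (if i + j < i' then
          |∫ ω, (U (i + j) ω - U i ω) * (U (i' + j) ω - U i' ω) ∂ℙ| else 0)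
        ≤ C' * n := by
  classical
  set K : ℝ := 128 * (∫ ω, |U 0 ω| ^ 5 ∂ℙ) + 1 with hKdef
  have hK5 : 0 ≤ ∫ ω, |U 0 ω| ^ 5 ∂ℙ := integral_nonneg fun ω => by positivity
  have hK0 : 0 ≤ K := by rw [hKdef]; linarith
  set g : ℕ → ℝ := gbound C v K with hgdef
  have hgnn : ∀ h, 0 ≤ g h := fun h => gbound_nonneg hC.le hK0 h
  have hsumg : Summable g := by
    have h1 : Summable (fun h : ℕ => 4 * C * (h : ℝ) ^ (1 - v)) :=
      (Real.summable_nat_rpow.mpr (by linarith)).mul_left _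
    have h2 : Summable (fun h : ℕ => (K ^ 2 + 2 * K) * (h : ℝ) ^ (-(3/2) : ℝ)) :=
      (Real.summable_nat_rpow.mpr (by norm_num)).mul_left _
    exact h1.add h2
  have hsum : Summable (fun m : ℕ => g (m + 1)) := (summable_nat_add_iff 1).mpr hsumg
  set S : ℝ := ∑' m : ℕ, g (m + 1) with hSdef
  have hS0 : 0 ≤ S := tsum_nonneg fun m => hgnn _
  refine ⟨S + 1, by linarith, ?_⟩
  intro n j hn hj hjn
  set N := n - j + 1 with hNdef
  have hpair : ∀ i i' : ℕ, i + j < i' →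
      |∫ ω, (U (i + j) ω - U i ω) * (U (i' + j) ω - U i' ω) ∂ℙ| ≤ g (i' - (i + j)) :=
    fun i i' hlt => pair_bound U hMeas hStat hMom C v hC hMix j i i' hlt
  have inner : ∀ i : ℕ, ∑ i' ∈ Finset.range N,
      (if i + j < i' then
        |∫ ω, (U (i + j) ω - U i ω) * (U (i' + j) ω - U i' ω) ∂ℙ| else 0) ≤ S := by
    intro i
    have step1 : ∑ i' ∈ Finset.range N,
        (if i + j < i' then
          |∫ ω, (U (i + j) ω - U i ω) * (U (i' + j) ω - U i' ω) ∂ℙ| else 0)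
        ≤ ∑ i' ∈ Finset.range N, (if i + j < i' then g (i' - (i + j)) else 0) := by
      apply Finset.sum_le_sum
      intro i' _
      by_cases hlt : i + j < i'
      · simp only [if_pos hlt]
        exact hpair i i' hlt
      · simp only [if_neg hlt]
        exact le_rfl
    refine le_trans step1 ?_
    rw [← Finset.sum_filter]
    have hinj : ∀ a ∈ (Finset.range N).filter (fun i' => i + j < i'),
        ∀ b ∈ (Finset.range N).filter (fun i' => i + j < i'),
        a - (i + j + 1) = b - (i + j + 1) → a = b := by
      intro a ha b hb hab
      have ha' := (Finset.mem_filter.mp ha).2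
      have hb' := (Finset.mem_filter.mp hb).2
      omega
    have himg : ∑ i' ∈ (Finset.range N).filter (fun i' => i + j < i'), g (i' - (i + j))
        = ∑ m ∈ ((Finset.range N).filter (fun i' => i + j < i')).image
            (fun i' => i' - (i + j + 1)), g (m + 1) := by
      rw [Finset.sum_image hinj]
      apply Finset.sum_congr rfl
      intro i' hi'
      have h2 := (Finset.mem_filter.mp hi').2
      congr 1
      omega
    rw [himg]
    exact Summable.sum_le_tsum _ (fun m _ => hgnn _) hsum
  calc ∑ i ∈ Finset.range N, ∑ i' ∈ Finset.range N,
        (if i + j < i' then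
          |∫ ω, (U (i + j) ω - U i ω) * (U (i' + j) ω - U i' ω) ∂ℙ| else 0)
      ≤ ∑ _i ∈ Finset.range N, S := Finset.sum_le_sum fun i _ => inner i
    _ = (N : ℝ) * S := by rw [Finset.sum_const, Finset.card_range, nsmul_eq_mul]
    _ ≤ (S + 1) * n := by
        have hNn : (N : ℝ) ≤ (n : ℝ) := by exact_mod_cast (by omega : N ≤ n)
        have e1 : (N : ℝ) * S ≤ (n : ℝ) * S := mul_le_mul_of_nonneg_right hNn hS0
        have e2 : (n : ℝ) * S ≤ (n : ℝ) * (S + 1) :=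
          mul_le_mul_of_nonneg_left (by linarith) (Nat.cast_nonneg n)
        have e3 : (n : ℝ) * (S + 1) = (S + 1) * (n : ℝ) := mul_comm _ _
        linarith


end Aux

/-- assuming `v > 2`, the sum over pairs `(i, i')` with
`0 ≤ i, i' ≤ n − j` and `i + j < i'` of `|E[(U_{i+j} − U_i)(U_{i'+j} − U_{i'})]|`
is at most `C' n`. -/
theorem cross_terms_sum_bound
    {Ω : Type*} [MeasureSpace Ω] [IsProbabilityMeasure (ℙ : Measure Ω)]
    (U : ℕ → Ω → ℝ)
    (hMeas : ∀ i, Measurable (U i))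
    (hStat : ∀ k n : ℕ,
      Measure.map (fun ω => fun i : Fin (n + 1) => U (k + i) ω) ℙ
        = Measure.map (fun ω => fun i : Fin (n + 1) => U i ω) ℙ)
    (hSymm : Measure.map (U 0) ℙ = Measure.map (fun ω => -U 0 ω) ℙ)
    (hMom : ∀ p : ℕ, 1 ≤ p → Integrable (fun ω => |U 0 ω| ^ p) ℙ)
    (C v : ℝ) (hC : 0 < C)
    (hMix : ∀ k h : ℕ, 1 ≤ h → ∀ A B : Set Ω,
      MeasurableSet[pastSigma U k] A → MeasurableSet[futureSigma U (k + h)] B →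
      |(ℙ (A ∩ B)).toReal - (ℙ A).toReal * (ℙ B).toReal| ≤ C * (h : ℝ) ^ (-v))
    (hv : 2 < v) :
    ∃ C' > (0 : ℝ), ∀ n j : ℕ, 1 ≤ n → 1 ≤ j → j ≤ n →
      ∑ i ∈ Finset.range (n - j + 1), ∑ i' ∈ Finset.range (n - j + 1),
        (if i + j < i' then
          |∫ ω, (U (i + j) ω - U i ω) * (U (i' + j) ω - U i' ω) ∂ℙ| else 0)
        ≤ C' * n := by
  exact cross_terms_sum_bound' U hMeas hStat hSymm hMom C v hC hMix hv

end DepNoise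
end
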